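/- arXiv:1302.0616 — 7 statements merged into one kernel-verified Lean document; each statement's English description precedes it below -/
import Mathlib

section
/- Let a, b ∈ ℝ with b ≠ 0 and a < b < -a, and set α = √(b−a), β = √(−a−b). If a twice differentiable function x : ℝ → ℝ satisfies the homogeneous equation x''(t) + a·x(t) + b·x(−t) = 0 for all t ∈ ℝ and x is bounded on ℝ, then x ≡ 0. -/
private lemma hasDerivAt_comp_neg (f : ℝ → ℝ) (hf : Differentiable ℝ f) (t : ℝ) :
    HasDerivAt (fun s => f (-s)) (-(deriv f (-t))) t := by
  have := ((hf (-t)).hasDerivAt.comp t (hasDerivAt_neg t))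
  simp at this
  exact this

private lemma bounded_sq_ode_zero (k : ℝ) (hk : 0 < k) (y : ℝ → ℝ)
    (hy1 : Differentiable ℝ y) (hy2 : Differentiable ℝ (deriv y))
    (hode : ∀ t, deriv (deriv y) t = k ^ 2 * y t)
    (M : ℝ) (hM : ∀ t, |y t| ≤ M) : ∀ t, y t = 0 := by
  have hM0 : 0 ≤ M := le_trans (abs_nonneg _) (hM 0)
  set c1 := deriv y 0 - k * y 0 with hc1
  set c2 := deriv y 0 + k * y 0 with hc2
  have hf : ∀ t, (deriv y t - k * y t) * Real.exp (k * t) = c1 := by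
    have hd : ∀ t, HasDerivAt (fun t => (deriv y t - k * y t) * Real.exp (k * t)) 0 t := by
      intro t
      have h1 : HasDerivAt (fun t => deriv y t - k * y t) (k ^ 2 * y t - k * deriv y t) t := by
        have := ((hy2 t).hasDerivAt).sub (((hy1 t).hasDerivAt).const_mul k)
        rwa [hode t] at this
      have h2 : HasDerivAt (fun t => Real.exp (k * t)) (Real.exp (k * t) * k) t := by
        simpa using (((hasDerivAt_id t).const_mul k).exp)
      have h3 : HasDerivAt (fun t => (deriv y t - k * y t) * Real.exp (k * t)) _ t := h1.mul h2
      convert h3 using 1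
      ring
    intro t
    have := is_const_of_deriv_eq_zero (fun s => (hd s).differentiableAt)
      (fun s => (hd s).deriv) t 0
    simpa using this
  have hg : ∀ t, (deriv y t + k * y t) * Real.exp (-(k * t)) = c2 := by
    have hd : ∀ t, HasDerivAt (fun t => (deriv y t + k * y t) * Real.exp (-(k * t))) 0 t := by
      intro t
      have h1 : HasDerivAt (fun t => deriv y t + k * y t) (k ^ 2 * y t + k * deriv y t) t := by
        have := ((hy2 t).hasDerivAt).add (((hy1 t).hasDerivAt).const_mul k)
        rwa [hode t] at this
      have h2 : HasDerivAt (fun t => Real.exp (-(k * t))) (Real.exp (-(k * t)) * (-k)) t := by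
        simpa using ((((hasDerivAt_id t).const_mul k).neg).exp)
      have h3 : HasDerivAt (fun t => (deriv y t + k * y t) * Real.exp (-(k * t))) _ t := h1.mul h2
      convert h3 using 1
      ring
    intro t
    have := is_const_of_deriv_eq_zero (fun s => (hd s).differentiableAt)
      (fun s => (hd s).deriv) t 0
    simpa using this
  have key : ∀ t, 2 * k * y t = c2 * Real.exp (k * t) - c1 * Real.exp (-(k * t)) := by
    intro t
    have hE := Real.exp_pos (k * t)
    have e1 : deriv y t - k * y t = c1 * Real.exp (-(k * t)) := by
      rw [Real.exp_neg, ← hf t]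
      field_simp
    have e2 : deriv y t + k * y t = c2 * Real.exp (k * t) := by
      have hEn := Real.exp_pos (-(k * t))
      rw [← hg t, Real.exp_neg]
      field_simp
    linarith
  have hc2z : c2 = 0 := by
    by_contra h2
    have habs2 : 0 < |c2| := abs_pos.2 h2
    set C := 2 * k * M + |c1| + |c2| + 1 with hC
    have hCpos : 0 < C := by positivity
    set t := Real.log (C / |c2|) / k with ht
    have hkt : k * t = Real.log (C / |c2|) := by
      rw [ht, mul_comm]
      exact div_mul_cancel₀ _ hk.ne'
    have hexp : Real.exp (k * t) = C / |c2| := by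
      rw [hkt, Real.exp_log (div_pos hCpos habs2)]
    have hexpneg : Real.exp (-(k * t)) = |c2| / C := by
      rw [Real.exp_neg, hexp, inv_div]
    have hkey := key t
    rw [hexp, hexpneg] at hkey
    have h1 : |c2 * (C / |c2|)| = C := by
      rw [abs_mul, abs_div, abs_abs, abs_of_pos hCpos]
      field_simp
    have hle1 : |c2| / C ≤ 1 := by
      rw [div_le_one hCpos]
      nlinarith [abs_nonneg c1]
    have h2' : |c1 * (|c2| / C)| ≤ |c1| := by
      rw [abs_mul, abs_of_nonneg (by positivity : (0:ℝ) ≤ |c2| / C)]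
      nlinarith [abs_nonneg c1]
    have heq' : c2 * (C / |c2|) = 2 * k * y t + c1 * (|c2| / C) := by linarith
    have h3 : |2 * k * y t + c1 * (|c2| / C)| ≤ |2 * k * y t| + |c1 * (|c2| / C)| :=
      abs_add_le _ _
    have h4 : |2 * k * y t| ≤ 2 * k * M := by
      rw [abs_mul, abs_of_nonneg (by positivity : (0:ℝ) ≤ 2 * k)]
      nlinarith [hM t]
    rw [heq'] at h1
    nlinarith
  have hc1z : c1 = 0 := by
    by_contra h1
    have habs1 : 0 < |c1| := abs_pos.2 h1
    set C := 2 * k * M + 1 with hC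
    have hCpos : 0 < C := by positivity
    set t := -(Real.log (C / |c1|) / k) with ht
    have hkt : -(k * t) = Real.log (C / |c1|) := by
      rw [ht, mul_neg, neg_neg, mul_comm]
      exact div_mul_cancel₀ _ hk.ne'
    have hexpneg : Real.exp (-(k * t)) = C / |c1| := by
      rw [hkt, Real.exp_log (div_pos hCpos habs1)]
    have hkey := key t
    rw [hc2z, hexpneg, zero_mul, zero_sub] at hkey
    have h1' : |c1 * (C / |c1|)| = C := by
      rw [abs_mul, abs_div, abs_abs, abs_of_pos hCpos]
      field_simp
    have h4 : |2 * k * y t| ≤ 2 * k * M := by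
      rw [abs_mul, abs_of_nonneg (by positivity : (0:ℝ) ≤ 2 * k)]
      nlinarith [hM t]
    rw [show c1 * (C / |c1|) = -(2 * k * y t) by linarith] at h1'
    rw [abs_neg] at h1'
    nlinarith
  intro t
  have := key t
  rw [hc1z, hc2z, zero_mul, zero_mul] at this
  nlinarith

theorem homogeneous_bounded_is_zero (a b : ℝ) (hb : b ≠ 0) (hab : a < b) (hba : b < -a)
    (x : ℝ → ℝ) (hx1 : Differentiable ℝ x) (hx2 : Differentiable ℝ (deriv x))
    (heq : ∀ t : ℝ, deriv (deriv x) t + a * x t + b * x (-t) = 0)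
    (hbdd : ∃ M : ℝ, ∀ t : ℝ, |x t| ≤ M) :
    ∀ t : ℝ, x t = 0 := by
  obtain ⟨M, hM⟩ := hbdd
  -- properties of z := fun s => x (-s)
  set z : ℝ → ℝ := fun s => x (-s) with hzdef
  have hz1 : Differentiable ℝ z := fun t => (hasDerivAt_comp_neg x hx1 t).differentiableAt
  have hzderiv : deriv z = fun t => -(deriv x (-t)) :=
    funext fun t => (hasDerivAt_comp_neg x hx1 t).deriv
  have hz2 : Differentiable ℝ (deriv z) := by
    rw [hzderiv]
    exact fun t => ((hasDerivAt_comp_neg (deriv x) hx2 t).neg).differentiableAt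
  have hzderiv2 : ∀ t, deriv (deriv z) t = deriv (deriv x) (-t) := by
    intro t
    rw [hzderiv]
    simpa using ((hasDerivAt_comp_neg (deriv x) hx2 t).neg).deriv
  -- even part u and odd part v
  set u : ℝ → ℝ := fun t => x t + z t with hudef
  set v : ℝ → ℝ := fun t => x t - z t with hvdef
  have hu1 : Differentiable ℝ u := hx1.add hz1
  have hv1 : Differentiable ℝ v := hx1.sub hz1
  have huderiv : deriv u = fun t => deriv x t + deriv z t :=
    funext fun t => by
      exact ((hx1 t).hasDerivAt.add (hz1 t).hasDerivAt).deriv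
  have hvderiv : deriv v = fun t => deriv x t - deriv z t :=
    funext fun t => by
      exact ((hx1 t).hasDerivAt.sub (hz1 t).hasDerivAt).deriv
  have hu2 : Differentiable ℝ (deriv u) := by
    rw [huderiv]; exact hx2.add hz2
  have hv2 : Differentiable ℝ (deriv v) := by
    rw [hvderiv]; exact hx2.sub hz2
  have huderiv2 : ∀ t, deriv (deriv u) t = deriv (deriv x) t + deriv (deriv z) t := by
    intro t
    rw [huderiv]
    exact ((hx2 t).hasDerivAt.add (hz2 t).hasDerivAt).deriv
  have hvderiv2 : ∀ t, deriv (deriv v) t = deriv (deriv x) t - deriv (deriv z) t := by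
    intro t
    rw [hvderiv]
    exact ((hx2 t).hasDerivAt.sub (hz2 t).hasDerivAt).deriv
  -- the two scalar ODEs
  have hβ : (0:ℝ) < -(a + b) := by linarith
  have hα : (0:ℝ) < b - a := by linarith
  have hkβ : Real.sqrt (-(a + b)) ^ 2 = -(a + b) := Real.sq_sqrt hβ.le
  have hkα : Real.sqrt (b - a) ^ 2 = b - a := Real.sq_sqrt hα.le
  have hueq : ∀ t, deriv (deriv u) t = Real.sqrt (-(a + b)) ^ 2 * u t := by
    intro t
    rw [hkβ, huderiv2 t, hzderiv2 t]
    have h1 := heq t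
    have h2 := heq (-t)
    rw [neg_neg] at h2
    simp only [hudef, hzdef]
    ring_nf
    nlinarith [h1, h2]
  have hveq : ∀ t, deriv (deriv v) t = Real.sqrt (b - a) ^ 2 * v t := by
    intro t
    rw [hkα, hvderiv2 t, hzderiv2 t]
    have h1 := heq t
    have h2 := heq (-t)
    rw [neg_neg] at h2
    simp only [hvdef, hzdef]
    ring_nf
    nlinarith [h1, h2]
  have huM : ∀ t, |u t| ≤ 2 * M := by
    intro t
    simp only [hudef, hzdef]
    calc |x t + x (-t)| ≤ |x t| + |x (-t)| := abs_add_le _ _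
      _ ≤ 2 * M := by linarith [hM t, hM (-t)]
  have hvM : ∀ t, |v t| ≤ 2 * M := by
    intro t
    simp only [hvdef, hzdef]
    calc |x t - x (-t)| ≤ |x t| + |x (-t)| := abs_sub _ _
      _ ≤ 2 * M := by linarith [hM t, hM (-t)]
  have hu0 := bounded_sq_ode_zero (Real.sqrt (-(a + b))) (Real.sqrt_pos.2 hβ) u hu1 hu2
    hueq (2 * M) huM
  have hv0 := bounded_sq_ode_zero (Real.sqrt (b - a)) (Real.sqrt_pos.2 hα) v hv1 hv2
    hveq (2 * M) hvM
  intro t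
  have h1 := hu0 t
  have h2 := hv0 t
  simp only [hudef, hvdef, hzdef] at h1 h2
  linarith
end

section
/- Let a, b ∈ ℝ with b ≠ 0 and a < b < -a. Then for any continuous bounded g : ℝ → ℝ there is at most one bounded twice differentiable solution x : ℝ → ℝ of x''(t) + a·x(t) + b·x(−t) = g(t) on ℝ. -/
open Filter Real

private lemma d_aux (y : ℝ → ℝ) (h1 : Differentiable ℝ y) (e : ℝ) :
    Differentiable ℝ (fun t => y t + e * y (-t)) ∧
    deriv (fun t => y t + e * y (-t)) = fun t => deriv y t + (-e) * deriv y (-t) := by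
  have hyn : Differentiable ℝ (fun t => y (-t)) := h1.comp differentiable_neg
  refine ⟨h1.add (hyn.const_mul e), funext fun t => ?_⟩
  rw [deriv_fun_add (h1 t) ((hyn.const_mul e) t), deriv_const_mul e (hyn t), deriv_comp_neg]
  ring

private lemma d2_aux (y : ℝ → ℝ) (h1 : Differentiable ℝ y) (h2 : Differentiable ℝ (deriv y))
    (e : ℝ) :
    Differentiable ℝ (fun t => y t + e * y (-t)) ∧
    Differentiable ℝ (deriv (fun t => y t + e * y (-t))) ∧
    ∀ t, deriv (deriv (fun t => y t + e * y (-t))) t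
      = deriv (deriv y) t + e * deriv (deriv y) (-t) := by
  obtain ⟨hd1, he1⟩ := d_aux y h1 e
  obtain ⟨hd2, he2⟩ := d_aux (deriv y) h2 (-e)
  refine ⟨hd1, by rw [he1]; exact hd2, fun t => ?_⟩
  rw [he1, he2]
  simp

theorem key_ode (c : ℝ) (hc : 0 < c) (u : ℝ → ℝ) (hu : Differentiable ℝ u)
    (hu2 : Differentiable ℝ (deriv u)) (M : ℝ) (hbdd : ∀ t, |u t| ≤ M)
    (heq : ∀ t, deriv (deriv u) t = c * u t) : ∀ t, u t = 0 := by
  set s := Real.sqrt c with hsdef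
  have hs : 0 < s := Real.sqrt_pos.2 hc
  have hs2 : s * s = c := Real.mul_self_sqrt hc.le
  set w : ℝ → ℝ := fun t => deriv u t + s * u t with hw
  have hwd : ∀ t, HasDerivAt w (s * w t) t := by
    intro t
    have h1 : HasDerivAt (deriv u) (c * u t) t := by
      have := (hu2 t).hasDerivAt
      rwa [heq t] at this
    have h2 : HasDerivAt (fun t => s * u t) (s * deriv u t) t := (hu t).hasDerivAt.const_mul s
    have h3 : HasDerivAt w (c * u t + s * deriv u t) t := h1.add h2
    convert h3 using 1
    simp only [hw]; ring_nf; rw [← hs2]; ring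
  -- w t = w 0 * exp (s * t)
  have hwx : ∀ t, w t = w 0 * Real.exp (s * t) := by
    intro t
    have hWd : ∀ t, HasDerivAt (fun t => w t * Real.exp (-(s * t))) 0 t := by
      intro t
      have he : HasDerivAt (fun t : ℝ => Real.exp (-(s * t))) (-s * Real.exp (-(s * t))) t := by
        have : HasDerivAt (fun t : ℝ => -(s * t)) (-s) t := by
          have h0 : HasDerivAt (fun t : ℝ => -(s * t)) (-(s * 1)) t := ((hasDerivAt_id t).const_mul s).neg
          simpa using h0
        simpa [mul_comm] using this.exp
      have : HasDerivAt (fun t => w t * Real.exp (-(s * t))) (s * w t * Real.exp (-(s * t)) + w t * (-s * Real.exp (-(s * t)))) t := (hwd t).mul he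
      convert this using 1
      ring
    have hW : Differentiable ℝ (fun t => w t * Real.exp (-(s * t))) := fun t => (hWd t).differentiableAt
    have hconst := is_const_of_deriv_eq_zero hW (fun t => (hWd t).deriv) t 0
    simp only [mul_zero, neg_zero, Real.exp_zero, mul_one] at hconst
    rw [← hconst, mul_assoc, ← Real.exp_add]
    simp
  set A : ℝ := w 0 / (2 * s) with hA
  -- u t * exp (s t) = A * exp (2 s t) + (u 0 - A)
  have hux : ∀ t, u t = A * Real.exp (s * t) + (u 0 - A) * Real.exp (-(s * t)) := by
    have hPd : ∀ t, HasDerivAt (fun t => u t * Real.exp (s * t) - A * Real.exp (2 * s * t)) 0 t := by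
      intro t
      have he : HasDerivAt (fun t : ℝ => Real.exp (s * t)) (s * Real.exp (s * t)) t := by
        have : HasDerivAt (fun t : ℝ => s * t) s t := by simpa using (hasDerivAt_id t).const_mul s
        simpa [mul_comm] using this.exp
      have he2 : HasDerivAt (fun t : ℝ => Real.exp (2 * s * t)) (2 * s * Real.exp (2 * s * t)) t := by
        have : HasDerivAt (fun t : ℝ => 2 * s * t) (2 * s) t := by simpa using (hasDerivAt_id t).const_mul (2 * s)
        simpa [mul_comm] using this.exp
      have h1 : HasDerivAt (fun t => u t * Real.exp (s * t) - A * Real.exp (2 * s * t)) (deriv u t * Real.exp (s * t) + u t * (s * Real.exp (s * t)) - A * (2 * s * Real.exp (2 * s * t))) t := ((hu t).hasDerivAt.mul he).sub (he2.const_mul A)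
      convert h1 using 1
      have : deriv u t * Real.exp (s * t) + u t * (s * Real.exp (s * t)) = w t * Real.exp (s * t) := by
        simp only [hw]; ring
      rw [eq_comm]
      calc deriv u t * Real.exp (s * t) + u t * (s * Real.exp (s * t)) - A * (2 * s * Real.exp (2 * s * t))
          = w t * Real.exp (s * t) - A * (2 * s) * Real.exp (2 * s * t) := by simp only [hw]; ring
        _ = 0 := by
            rw [hwx t, hA]
            have h5 : w 0 / (2 * s) * (2 * s) = w 0 := by field_simp
            rw [h5, mul_assoc, ← Real.exp_add, show s * t + s * t = 2 * s * t by ring]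
            ring
    intro t
    have hP : Differentiable ℝ (fun t => u t * Real.exp (s * t) - A * Real.exp (2 * s * t)) :=
      fun t => (hPd t).differentiableAt
    have hconst := is_const_of_deriv_eq_zero hP (fun t => (hPd t).deriv) t 0
    simp only [mul_zero, Real.exp_zero, mul_one] at hconst
    have h2 : u t * Real.exp (s * t) = A * Real.exp (2 * s * t) + (u 0 - A) := by linarith
    have hne : Real.exp (s * t) ≠ 0 := Real.exp_ne_zero _
    have h2st : Real.exp (2 * s * t) = Real.exp (s * t) * Real.exp (s * t) := by
      rw [← Real.exp_add]; ring_nf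
    rw [h2st] at h2
    have hinv : Real.exp (-(s * t)) = (Real.exp (s * t))⁻¹ := by rw [Real.exp_neg]
    rw [hinv]
    field_simp
    linarith [h2]
  -- A = 0 via t → ∞
  have hM0 : 0 ≤ M := le_trans (abs_nonneg _) (hbdd 0)
  have htend_exp : Tendsto (fun t : ℝ => Real.exp (-(s * t))) atTop (nhds 0) := by
    apply Real.tendsto_exp_atBot.comp
    apply Filter.tendsto_neg_atBot_iff.mpr  -- maybe wrong name
    exact (tendsto_const_mul_atTop_of_pos hs).mpr tendsto_id
  have hA0 : A = 0 := by
    have h1 : Tendsto (fun t : ℝ => u t * Real.exp (-(s * t))) atTop (nhds 0) := by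
      apply squeeze_zero_norm (a := fun t => M * Real.exp (-(s * t)))
      · intro t
        rw [norm_mul, Real.norm_eq_abs, Real.norm_eq_abs, abs_of_pos (Real.exp_pos _)]
        exact mul_le_mul_of_nonneg_right (hbdd t) (Real.exp_pos _).le
      · simpa using htend_exp.const_mul M
    have h2 : Tendsto (fun t : ℝ => (u 0 - A) * (Real.exp (-(s * t)) * Real.exp (-(s * t)))) atTop (nhds 0) := by
      simpa using ((htend_exp.mul htend_exp).const_mul (u 0 - A))
    have h3 : Tendsto (fun t : ℝ => u t * Real.exp (-(s * t)) - (u 0 - A) * (Real.exp (-(s * t)) * Real.exp (-(s * t)))) atTop (nhds 0) := by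
      simpa using h1.sub h2
    have h4 : (fun t : ℝ => u t * Real.exp (-(s * t)) - (u 0 - A) * (Real.exp (-(s * t)) * Real.exp (-(s * t)))) = fun _ => A := by
      funext t
      rw [hux t]
      have hne : Real.exp (s * t) * Real.exp (-(s * t)) = 1 := by rw [← Real.exp_add]; simp
      linear_combination A * hne
    rw [h4] at h3
    exact tendsto_nhds_unique tendsto_const_nhds h3
  -- C = 0 via t → -∞
  have htend_exp' : Tendsto (fun t : ℝ => Real.exp (s * t)) atBot (nhds 0) := by
    apply Real.tendsto_exp_atBot.comp
    exact (tendsto_const_mul_atBot_of_pos hs).mpr tendsto_id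
  have hC0 : u 0 - A = 0 := by
    have h1 : Tendsto (fun t : ℝ => u t * Real.exp (s * t)) atBot (nhds 0) := by
      apply squeeze_zero_norm (a := fun t => M * Real.exp (s * t))
      · intro t
        rw [norm_mul, Real.norm_eq_abs, Real.norm_eq_abs, abs_of_pos (Real.exp_pos _)]
        exact mul_le_mul_of_nonneg_right (hbdd t) (Real.exp_pos _).le
      · simpa using htend_exp'.const_mul M
    have h4 : (fun t : ℝ => u t * Real.exp (s * t)) = fun t => (u 0 - A) := by
      funext t
      rw [hux t, hA0]
      have hne : Real.exp (s * t) * Real.exp (-(s * t)) = 1 := by rw [← Real.exp_add]; simp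
      linear_combination (u 0) * hne
    rw [h4] at h1
    exact tendsto_nhds_unique tendsto_const_nhds h1
  have hu0 : u 0 = 0 := by rw [hA0] at hC0; linarith
  intro t
  rw [hux t, hA0, hu0]
  ring

theorem bounded_solution_unique (a b : ℝ) (hb : b ≠ 0) (hab : a < b) (hba : b < -a)
    (g : ℝ → ℝ) (hg : Continuous g) (hgbdd : ∃ M : ℝ, ∀ t : ℝ, |g t| ≤ M)
    (x₁ x₂ : ℝ → ℝ)
    (hx₁d : Differentiable ℝ x₁) (hx₁d2 : Differentiable ℝ (deriv x₁))
    (hx₂d : Differentiable ℝ x₂) (hx₂d2 : Differentiable ℝ (deriv x₂))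
    (hx₁bdd : ∃ M : ℝ, ∀ t : ℝ, |x₁ t| ≤ M) (hx₂bdd : ∃ M : ℝ, ∀ t : ℝ, |x₂ t| ≤ M)
    (heq₁ : ∀ t : ℝ, deriv (deriv x₁) t + a * x₁ t + b * x₁ (-t) = g t)
    (heq₂ : ∀ t : ℝ, deriv (deriv x₂) t + a * x₂ t + b * x₂ (-t) = g t) :
    x₁ = x₂ := by
  obtain ⟨M₁, hM₁⟩ := hx₁bdd
  obtain ⟨M₂, hM₂⟩ := hx₂bdd
  set y : ℝ → ℝ := fun t => x₁ t - x₂ t with hy_def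
  have hyd : Differentiable ℝ y := hx₁d.sub hx₂d
  have hderiv_y : deriv y = fun t => deriv x₁ t - deriv x₂ t :=
    funext fun t => deriv_sub (hx₁d t) (hx₂d t)
  have hyd2 : Differentiable ℝ (deriv y) := by rw [hderiv_y]; exact hx₁d2.sub hx₂d2
  have hybdd : ∀ t, |y t| ≤ M₁ + M₂ := by
    intro t
    calc |y t| = |x₁ t - x₂ t| := rfl
      _ ≤ |x₁ t| + |x₂ t| := abs_sub _ _
      _ ≤ M₁ + M₂ := add_le_add (hM₁ t) (hM₂ t)
  have hy2 : ∀ t, deriv (deriv y) t = -(a * y t) - b * y (-t) := by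
    intro t
    have hdd : deriv (deriv y) t = deriv (deriv x₁) t - deriv (deriv x₂) t := by
      rw [hderiv_y]; exact deriv_sub (hx₁d2 t) (hx₂d2 t)
    have e1 := heq₁ t; have e2 := heq₂ t
    simp only [hy_def]
    rw [hdd]; linarith
  -- even and odd parts
  have key : ∀ e : ℝ, e = 1 ∨ e = -1 →
      ∀ t, y t + e * y (-t) = 0 := by
    intro e he
    set c : ℝ := -(a + e * b) with hc_def
    have hcpos : 0 < c := by rcases he with h | h <;> rw [hc_def, h] <;> linarith
    obtain ⟨hud, hud2, hud3⟩ := d2_aux y hyd hyd2 e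
    apply key_ode c hcpos _ hud hud2 (2 * (M₁ + M₂))
    · intro t
      calc |y t + e * y (-t)| ≤ |y t| + |e * y (-t)| := abs_add_le _ _
        _ = |y t| + |y (-t)| := by rcases he with h | h <;> rw [h] <;> simp [abs_mul]
        _ ≤ (M₁ + M₂) + (M₁ + M₂) := add_le_add (hybdd t) (hybdd (-t))
        _ = 2 * (M₁ + M₂) := by ring
    · intro t
      rw [hud3 t, hy2 t, hy2 (-t), neg_neg]
      rcases he with h | h <;> rw [h, hc_def, h] <;> ring
  have hyz : ∀ t, y t = 0 := by
    intro t
    have h1 := key 1 (Or.inl rfl) t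
    have h2 := key (-1) (Or.inr rfl) t
    linarith [h1, h2]
  funext t
  have := hyz t
  simp only [hy_def] at this
  linarith
end

section
/- Let a, b ∈ ℝ with b ≠ 0 and a < b < -a, set α = √(b−a), β = √(−a−b), and suppose g : ℝ → ℝ is almost periodic. Then the function x(t) = ∫_t^∞ e^{α(t−s)}(g(s)+g(−s)) ds + ∫_{−∞}^t e^{−α(t−s)}(g(s)+g(−s)) ds + β∫_t^∞ e^{β(t−s)}(−g(s)+g(−s)) ds + β∫_{−∞}^t e^{−β(t−s)}(g(s)−g(−s)) ds is almost periodic; in fact every ε-translation number τ of g satisfies |x(t+τ) − x(t)| ≤ 4(1/α + 1)ε for all t ∈ ℝ. -/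
open MeasureTheory

def RelativelyDense (S : Set ℝ) : Prop :=
  ∃ L > 0, ∀ x : ℝ, ∃ τ ∈ S, τ ∈ Set.Icc x (x + L)

def AlmostPeriodic (g : ℝ → ℝ) : Prop :=
  Continuous g ∧ ∀ ε > 0, RelativelyDense {τ : ℝ | ∀ t : ℝ, |g (t + τ) - g t| < ε}

/-! ### Auxiliary lemmas -/

lemma ap_bounded {g : ℝ → ℝ} (hg : AlmostPeriodic g) : ∃ M : ℝ, ∀ t, |g t| ≤ M := by
  obtain ⟨hc, hT⟩ := hg
  obtain ⟨L, hL, hd⟩ := hT 1 one_pos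
  obtain ⟨C, hC⟩ := (isCompact_Icc (a := (0:ℝ)) (b := L)).exists_bound_of_continuousOn
    hc.continuousOn
  refine ⟨C + 1, fun t => ?_⟩
  obtain ⟨τ, hτ, hmem⟩ := hd (-t)
  have h1 : |g (t + τ) - g t| < 1 := hτ t
  have h2 : t + τ ∈ Set.Icc (0:ℝ) L := ⟨by linarith [hmem.1], by linarith [hmem.2]⟩
  have h3 : ‖g (t + τ)‖ ≤ C := hC _ h2
  rw [Real.norm_eq_abs] at h3
  have : |g t| ≤ |g (t + τ)| + |g (t + τ) - g t| := by
    have := abs_sub_abs_le_abs_sub (g (t + τ)) (g t)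
    have := abs_nonneg (g (t + τ) - g t)
    linarith [neg_abs_le (g (t + τ) - g t), abs_sub_abs_le_abs_sub (g t) (g (t + τ)),
      abs_sub_comm (g t) (g (t + τ))]
  linarith

/-- The canonical integral form. -/
noncomputable def Fint (c σ : ℝ) (ψ : ℝ → ℝ) (t : ℝ) : ℝ :=
  ∫ u in Set.Ioi (0:ℝ), Real.exp (-(c*u)) * ψ (t + σ*u)

lemma shift_Ioi (f : ℝ → ℝ) (t : ℝ) :
    ∫ s in Set.Ioi t, f s = ∫ u in Set.Ioi (0:ℝ), f (t + u) := by
  have A : MeasurableEmbedding (fun u : ℝ => u + t) :=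
    (Homeomorph.addRight t).isClosedEmbedding.measurableEmbedding
  have h := A.setIntegral_map (μ := volume) f (Set.Ioi t)
  rw [map_add_right_eq_self volume t] at h
  have hpre : (fun u : ℝ => u + t) ⁻¹' Set.Ioi t = Set.Ioi 0 := by
    ext u; simp [Set.mem_Ioi]
  rw [h, hpre]
  refine setIntegral_congr_fun measurableSet_Ioi (fun u _ => ?_)
  rw [add_comm]

lemma shift_Iio (f : ℝ → ℝ) (t : ℝ) :
    ∫ s in Set.Iio t, f s = ∫ u in Set.Ioi (0:ℝ), f (t - u) := by
  have h1 : ∫ s in Set.Iio t, f s = ∫ s in Set.Iic t, f s :=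
    (integral_Iic_eq_integral_Iio (μ := volume) (f := f) (x := t)).symm
  have h2 : ∫ u in Set.Ioi (-t), f (-u) = ∫ s in Set.Iic (-(-t)), f s :=
    integral_comp_neg_Ioi (-t) f
  rw [neg_neg] at h2
  rw [h1, ← h2, shift_Ioi (fun u => f (-u)) (-t)]
  refine setIntegral_congr_fun measurableSet_Ioi (fun u _ => ?_)
  ring_nf

lemma integral_exp_decay (c : ℝ) (hc : 0 < c) :
    ∫ u in Set.Ioi (0:ℝ), Real.exp (-(c*u)) = c⁻¹ := by
  have h := integral_comp_mul_left_Ioi (fun x => Real.exp (-x)) 0 hc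
  simp only [mul_zero] at h
  rw [h, integral_exp_neg_Ioi, neg_zero, Real.exp_zero, smul_eq_mul, mul_one]

lemma Fint_integrableOn {c : ℝ} (hc : 0 < c) {ψ : ℝ → ℝ} (hψ : Continuous ψ)
    {M : ℝ} (hM : ∀ s, |ψ s| ≤ M) (σ t : ℝ) :
    IntegrableOn (fun u => Real.exp (-(c*u)) * ψ (t + σ*u)) (Set.Ioi (0:ℝ)) := by
  have hint : IntegrableOn (fun u : ℝ => M * Real.exp (-c * u)) (Set.Ioi (0:ℝ)) :=
    (exp_neg_integrableOn_Ioi 0 hc).const_mul M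
  refine hint.mono' ?_ ?_
  · exact ((Real.continuous_exp.comp (continuous_const.mul continuous_id).neg).mul
      (hψ.comp (continuous_const.add (continuous_const.mul continuous_id)))).aestronglyMeasurable
  · refine Filter.Eventually.of_forall (fun u => ?_)
    show ‖Real.exp (-(c*u)) * ψ (t + σ*u)‖ ≤ M * Real.exp (-c*u)
    rw [Real.norm_eq_abs, abs_mul, abs_of_pos (Real.exp_pos _), neg_mul, mul_comm M]
    exact mul_le_mul_of_nonneg_left (hM _) (Real.exp_pos _).le

lemma Fint_diff_bound {c : ℝ} (hc : 0 < c) {ψ₁ ψ₂ : ℝ → ℝ} (hψ₁ : Continuous ψ₁)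
    (hψ₂ : Continuous ψ₂) {M₁ M₂ : ℝ} (hM₁ : ∀ s, |ψ₁ s| ≤ M₁) (hM₂ : ∀ s, |ψ₂ s| ≤ M₂)
    {δ : ℝ} (hδ : ∀ s, |ψ₁ s - ψ₂ s| ≤ δ) (σ t : ℝ) :
    |Fint c σ ψ₁ t - Fint c σ ψ₂ t| ≤ δ / c := by
  have hi1 := Fint_integrableOn hc hψ₁ hM₁ σ t
  have hi2 := Fint_integrableOn hc hψ₂ hM₂ σ t
  rw [Fint, Fint, ← integral_sub hi1 hi2]
  have heq : ∀ u : ℝ, Real.exp (-(c*u)) * ψ₁ (t + σ*u) - Real.exp (-(c*u)) * ψ₂ (t + σ*u)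
      = Real.exp (-(c*u)) * (ψ₁ (t + σ*u) - ψ₂ (t + σ*u)) := fun u => by ring
  have hbi : IntegrableOn (fun u : ℝ => δ * Real.exp (-(c*u))) (Set.Ioi (0:ℝ)) := by
    have : IntegrableOn (fun u : ℝ => Real.exp (-c * u)) (Set.Ioi (0:ℝ)) :=
      exp_neg_integrableOn_Ioi 0 hc
    have h2 := this.const_mul δ
    simp only [neg_mul] at h2
    exact h2
  have hnorm : ‖∫ u in Set.Ioi (0:ℝ),
      (Real.exp (-(c*u)) * ψ₁ (t + σ*u) - Real.exp (-(c*u)) * ψ₂ (t + σ*u))‖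
      ≤ ∫ u in Set.Ioi (0:ℝ), δ * Real.exp (-(c*u)) := by
    refine norm_integral_le_of_norm_le hbi (Filter.Eventually.of_forall (fun u => ?_))
    rw [heq u, Real.norm_eq_abs, abs_mul, abs_of_pos (Real.exp_pos _), mul_comm δ _]
    exact mul_le_mul_of_nonneg_left (hδ _) (Real.exp_pos _).le
  rw [Real.norm_eq_abs] at hnorm
  calc |∫ u in Set.Ioi (0:ℝ),
        (Real.exp (-(c*u)) * ψ₁ (t + σ*u) - Real.exp (-(c*u)) * ψ₂ (t + σ*u))|
      ≤ ∫ u in Set.Ioi (0:ℝ), δ * Real.exp (-(c*u)) := hnorm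
    _ = δ * c⁻¹ := by rw [integral_const_mul, integral_exp_decay c hc]
    _ = δ / c := by rw [div_eq_mul_inv]

lemma Fint_continuous {c : ℝ} (hc : 0 < c) {ψ : ℝ → ℝ} (hψ : Continuous ψ)
    {M : ℝ} (hM : ∀ s, |ψ s| ≤ M) (σ : ℝ) :
    Continuous (Fint c σ ψ) := by
  refine continuous_of_dominated (bound := fun u => M * Real.exp (-c * u))
    (fun t => ?_) (fun t => ?_) ?_ ?_
  · exact ((Real.continuous_exp.comp (continuous_const.mul continuous_id).neg).mul
      (hψ.comp (continuous_const.add (continuous_const.mul continuous_id)))).aestronglyMeasurable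
  · refine Filter.Eventually.of_forall (fun u => ?_)
    show ‖Real.exp (-(c*u)) * ψ (t + σ*u)‖ ≤ M * Real.exp (-c*u)
    rw [Real.norm_eq_abs, abs_mul, abs_of_pos (Real.exp_pos _), neg_mul, mul_comm M]
    exact mul_le_mul_of_nonneg_left (hM _) (Real.exp_pos _).le
  · exact (exp_neg_integrableOn_Ioi 0 hc).const_mul M
  · refine Filter.Eventually.of_forall (fun u => ?_)
    exact continuous_const.mul (hψ.comp (continuous_id.add continuous_const))

lemma Fint_shift (c σ ψ τ t) :
    Fint c σ ψ (t + τ) = Fint c σ (fun s => ψ (s + τ)) t := by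
  unfold Fint
  refine setIntegral_congr_fun measurableSet_Ioi (fun u _ => ?_)
  congr 1
  ring_nf

theorem formula_almost_periodic (a b : ℝ) (hb : b ≠ 0) (hab : a < b) (hba : b < -a)
    (α β : ℝ) (hα : α = Real.sqrt (b - a)) (hβ : β = Real.sqrt (-a - b))
    (g : ℝ → ℝ) (hg : AlmostPeriodic g)
    (x : ℝ → ℝ)
    (hx : ∀ t, x t =
      (∫ s in Set.Ioi t, Real.exp (α * (t - s)) * (g s + g (-s))) +
      (∫ s in Set.Iio t, Real.exp (-α * (t - s)) * (g s + g (-s))) +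
      β * (∫ s in Set.Ioi t, Real.exp (β * (t - s)) * (-g s + g (-s))) +
      β * (∫ s in Set.Iio t, Real.exp (-β * (t - s)) * (g s - g (-s)))) :
    AlmostPeriodic x ∧
      ∀ ε > 0, ∀ τ : ℝ, (∀ t : ℝ, |g (t + τ) - g t| < ε) →
        ∀ t : ℝ, |x (t + τ) - x t| ≤ 4 * (1 / α + 1) * ε := by
  have hα0 : 0 < α := hα ▸ Real.sqrt_pos.mpr (by linarith)
  have hβ0 : 0 < β := hβ ▸ Real.sqrt_pos.mpr (by linarith)
  obtain ⟨M, hM⟩ := ap_bounded hg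
  have hgc : Continuous g := hg.1
  -- the three combinations
  set h₁ : ℝ → ℝ := fun s => g s + g (-s) with hh₁
  set h₂ : ℝ → ℝ := fun s => -g s + g (-s) with hh₂
  set h₃ : ℝ → ℝ := fun s => g s - g (-s) with hh₃
  have hc₁ : Continuous h₁ := hgc.add (hgc.comp continuous_neg)
  have hc₂ : Continuous h₂ := hgc.neg.add (hgc.comp continuous_neg)
  have hc₃ : Continuous h₃ := hgc.sub (hgc.comp continuous_neg)
  have hM₁ : ∀ s, |h₁ s| ≤ M + M := fun s =>
    (abs_add_le _ _).trans (add_le_add (hM s) (hM (-s)))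
  have hM₂ : ∀ s, |h₂ s| ≤ M + M := fun s => by
    refine (abs_add_le _ _).trans (add_le_add ?_ (hM (-s)))
    rw [abs_neg]; exact hM s
  have hM₃ : ∀ s, |h₃ s| ≤ M + M := fun s =>
    (abs_sub _ _).trans (add_le_add (hM s) (hM (-s)))
  -- representation of x in terms of Fint
  have hrepr : ∀ t, x t = Fint α 1 h₁ t + Fint α (-1) h₁ t
      + β * Fint β 1 h₂ t + β * Fint β (-1) h₃ t := by
    intro t
    rw [hx t]
    have e1 : (∫ s in Set.Ioi t, Real.exp (α * (t - s)) * h₁ s) = Fint α 1 h₁ t := by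
      rw [shift_Ioi (fun s => Real.exp (α * (t - s)) * h₁ s) t, Fint]
      refine setIntegral_congr_fun measurableSet_Ioi (fun u _ => ?_)
      rw [show α * (t - (t + u)) = -(α * u) by ring, show t + u = t + 1 * u by ring]
    have e2 : (∫ s in Set.Iio t, Real.exp (-α * (t - s)) * h₁ s) = Fint α (-1) h₁ t := by
      rw [shift_Iio (fun s => Real.exp (-α * (t - s)) * h₁ s) t, Fint]
      refine setIntegral_congr_fun measurableSet_Ioi (fun u _ => ?_)
      rw [show -α * (t - (t - u)) = -(α * u) by ring, show t - u = t + (-1) * u by ring]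
    have e3 : (∫ s in Set.Ioi t, Real.exp (β * (t - s)) * h₂ s) = Fint β 1 h₂ t := by
      rw [shift_Ioi (fun s => Real.exp (β * (t - s)) * h₂ s) t, Fint]
      refine setIntegral_congr_fun measurableSet_Ioi (fun u _ => ?_)
      rw [show β * (t - (t + u)) = -(β * u) by ring, show t + u = t + 1 * u by ring]
    have e4 : (∫ s in Set.Iio t, Real.exp (-β * (t - s)) * h₃ s) = Fint β (-1) h₃ t := by
      rw [shift_Iio (fun s => Real.exp (-β * (t - s)) * h₃ s) t, Fint]
      refine setIntegral_congr_fun measurableSet_Ioi (fun u _ => ?_)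
      rw [show -β * (t - (t - u)) = -(β * u) by ring, show t - u = t + (-1) * u by ring]
    rw [e1, e2, e3, e4]
  -- the translation bound
  have key : ∀ ε > 0, ∀ τ : ℝ, (∀ t : ℝ, |g (t + τ) - g t| < ε) →
      ∀ t : ℝ, |x (t + τ) - x t| ≤ 4 * (1 / α + 1) * ε := by
    intro ε hε τ hτ t
    have hτ' : ∀ s, |g (-s - τ) - g (-s)| < ε := by
      intro s
      have := hτ (-s - τ)
      rw [show -s - τ + τ = -s by ring] at this
      rwa [abs_sub_comm]
    have hd₁ : ∀ s, |h₁ (s + τ) - h₁ s| ≤ 2 * ε := by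
      intro s
      have h1 := hτ s
      have h2 := hτ' s
      calc |h₁ (s + τ) - h₁ s| = |(g (s + τ) - g s) + (g (-(s + τ)) - g (-s))| := by
            rw [hh₁]; ring_nf
        _ ≤ |g (s + τ) - g s| + |g (-(s + τ)) - g (-s)| := abs_add_le _ _
        _ ≤ 2 * ε := by
            rw [show -(s + τ) = -s - τ by ring]; linarith
    have hd₂ : ∀ s, |h₂ (s + τ) - h₂ s| ≤ 2 * ε := by
      intro s
      have h1 := hτ s
      have h2 := hτ' s
      calc |h₂ (s + τ) - h₂ s| = |(-(g (s + τ) - g s)) + (g (-(s + τ)) - g (-s))| := by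
            rw [hh₂]; ring_nf
        _ ≤ |(-(g (s + τ) - g s))| + |g (-(s + τ)) - g (-s)| := abs_add_le _ _
        _ ≤ 2 * ε := by
            rw [abs_neg, show -(s + τ) = -s - τ by ring]; linarith
    have hd₃ : ∀ s, |h₃ (s + τ) - h₃ s| ≤ 2 * ε := by
      intro s
      have h1 := hτ s
      have h2 := hτ' s
      calc |h₃ (s + τ) - h₃ s| = |(g (s + τ) - g s) + (-(g (-(s + τ)) - g (-s)))| := by
            rw [hh₃]; ring_nf
        _ ≤ |g (s + τ) - g s| + |(-(g (-(s + τ)) - g (-s)))| := abs_add_le _ _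
        _ ≤ 2 * ε := by
            rw [abs_neg, show -(s + τ) = -s - τ by ring]; linarith
    have hcτ : ∀ {h : ℝ → ℝ}, Continuous h → Continuous (fun s => h (s + τ)) :=
      fun hc => hc.comp (continuous_id.add continuous_const)
    have hMτ : ∀ {h : ℝ → ℝ}, (∀ s, |h s| ≤ M + M) → (∀ s, |(fun s => h (s + τ)) s| ≤ M + M) :=
      fun hb s => hb (s + τ)
    have b1 : |Fint α 1 h₁ (t + τ) - Fint α 1 h₁ t| ≤ (2 * ε) / α := by
      rw [Fint_shift]
      exact Fint_diff_bound hα0 (hcτ hc₁) hc₁ (hMτ hM₁) hM₁ hd₁ 1 t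
    have b2 : |Fint α (-1) h₁ (t + τ) - Fint α (-1) h₁ t| ≤ (2 * ε) / α := by
      rw [Fint_shift]
      exact Fint_diff_bound hα0 (hcτ hc₁) hc₁ (hMτ hM₁) hM₁ hd₁ (-1) t
    have b3 : |Fint β 1 h₂ (t + τ) - Fint β 1 h₂ t| ≤ (2 * ε) / β := by
      rw [Fint_shift]
      exact Fint_diff_bound hβ0 (hcτ hc₂) hc₂ (hMτ hM₂) hM₂ hd₂ 1 t
    have b4 : |Fint β (-1) h₃ (t + τ) - Fint β (-1) h₃ t| ≤ (2 * ε) / β := by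
      rw [Fint_shift]
      exact Fint_diff_bound hβ0 (hcτ hc₃) hc₃ (hMτ hM₃) hM₃ hd₃ (-1) t
    rw [hrepr (t + τ), hrepr t]
    have hsum : |(Fint α 1 h₁ (t + τ) + Fint α (-1) h₁ (t + τ)
          + β * Fint β 1 h₂ (t + τ) + β * Fint β (-1) h₃ (t + τ))
        - (Fint α 1 h₁ t + Fint α (-1) h₁ t + β * Fint β 1 h₂ t + β * Fint β (-1) h₃ t)|
        ≤ |Fint α 1 h₁ (t + τ) - Fint α 1 h₁ t| + |Fint α (-1) h₁ (t + τ) - Fint α (-1) h₁ t|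
          + β * |Fint β 1 h₂ (t + τ) - Fint β 1 h₂ t|
          + β * |Fint β (-1) h₃ (t + τ) - Fint β (-1) h₃ t| := by
      have e : (Fint α 1 h₁ (t + τ) + Fint α (-1) h₁ (t + τ)
          + β * Fint β 1 h₂ (t + τ) + β * Fint β (-1) h₃ (t + τ))
        - (Fint α 1 h₁ t + Fint α (-1) h₁ t + β * Fint β 1 h₂ t + β * Fint β (-1) h₃ t)
        = (Fint α 1 h₁ (t + τ) - Fint α 1 h₁ t) + (Fint α (-1) h₁ (t + τ) - Fint α (-1) h₁ t)
          + β * (Fint β 1 h₂ (t + τ) - Fint β 1 h₂ t)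
          + β * (Fint β (-1) h₃ (t + τ) - Fint β (-1) h₃ t) := by ring
      rw [e]
      calc _ ≤ |(Fint α 1 h₁ (t + τ) - Fint α 1 h₁ t) + (Fint α (-1) h₁ (t + τ) - Fint α (-1) h₁ t)
          + β * (Fint β 1 h₂ (t + τ) - Fint β 1 h₂ t)|
          + |β * (Fint β (-1) h₃ (t + τ) - Fint β (-1) h₃ t)| := abs_add_le _ _
        _ ≤ |(Fint α 1 h₁ (t + τ) - Fint α 1 h₁ t) + (Fint α (-1) h₁ (t + τ) - Fint α (-1) h₁ t)|
          + |β * (Fint β 1 h₂ (t + τ) - Fint β 1 h₂ t)|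
          + |β * (Fint β (-1) h₃ (t + τ) - Fint β (-1) h₃ t)| := by
            gcongr; exact abs_add_le _ _
        _ ≤ |Fint α 1 h₁ (t + τ) - Fint α 1 h₁ t| + |Fint α (-1) h₁ (t + τ) - Fint α (-1) h₁ t|
          + |β * (Fint β 1 h₂ (t + τ) - Fint β 1 h₂ t)|
          + |β * (Fint β (-1) h₃ (t + τ) - Fint β (-1) h₃ t)| := by
            gcongr; exact abs_add_le _ _
        _ = _ := by
            rw [abs_mul, abs_mul, abs_of_pos hβ0]
    have hβmul : β * ((2 * ε) / β) = 2 * ε := by field_simp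
    have htot : |Fint α 1 h₁ (t + τ) - Fint α 1 h₁ t| + |Fint α (-1) h₁ (t + τ) - Fint α (-1) h₁ t|
          + β * |Fint β 1 h₂ (t + τ) - Fint β 1 h₂ t|
          + β * |Fint β (-1) h₃ (t + τ) - Fint β (-1) h₃ t|
        ≤ (2 * ε) / α + (2 * ε) / α + 2 * ε + 2 * ε := by
      have c3 : β * |Fint β 1 h₂ (t + τ) - Fint β 1 h₂ t| ≤ 2 * ε := by
        calc β * |Fint β 1 h₂ (t + τ) - Fint β 1 h₂ t| ≤ β * ((2 * ε) / β) := by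
              exact mul_le_mul_of_nonneg_left b3 hβ0.le
          _ = 2 * ε := hβmul
      have c4 : β * |Fint β (-1) h₃ (t + τ) - Fint β (-1) h₃ t| ≤ 2 * ε := by
        calc β * |Fint β (-1) h₃ (t + τ) - Fint β (-1) h₃ t| ≤ β * ((2 * ε) / β) := by
              exact mul_le_mul_of_nonneg_left b4 hβ0.le
          _ = 2 * ε := hβmul
      linarith
    have hfin : (2 * ε) / α + (2 * ε) / α + 2 * ε + 2 * ε = 4 * (1 / α + 1) * ε := by
      field_simp; ring
    linarith [hsum.trans htot]
  constructor
  · constructor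
    · have : Continuous (fun t => Fint α 1 h₁ t + Fint α (-1) h₁ t
          + β * Fint β 1 h₂ t + β * Fint β (-1) h₃ t) :=
        (((Fint_continuous hα0 hc₁ hM₁ 1).add (Fint_continuous hα0 hc₁ hM₁ (-1))).add
          ((continuous_const.mul (Fint_continuous hβ0 hc₂ hM₂ 1)))).add
          (continuous_const.mul (Fint_continuous hβ0 hc₃ hM₃ (-1)))
      exact this.congr (fun t => (hrepr t).symm)
    · intro ε hε
      have hK : (0:ℝ) < 4 * (1 / α + 1) := by positivity
      set ε' : ℝ := ε / (2 * (4 * (1 / α + 1))) with hε'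
      have hε'0 : 0 < ε' := by positivity
      obtain ⟨L, hL, hd⟩ := hg.2 ε' hε'0
      refine ⟨L, hL, fun y => ?_⟩
      obtain ⟨τ, hτ, hmem⟩ := hd y
      refine ⟨τ, fun t => ?_, hmem⟩
      have := key ε' hε'0 τ hτ t
      have hlt : 4 * (1 / α + 1) * ε' < ε := by
        have hKne : (4 * (1 / α + 1)) ≠ 0 := ne_of_gt hK
        have heq : 4 * (1 / α + 1) * ε' = ε / 2 := by
          rw [hε']
          field_simp
        rw [heq]
        linarith
      linarith
  · exact key
end

section
/- Let a, b ∈ ℝ with b ≠ 0 and a < b < -a, set α = √(b−a), β = √(−a−b), and suppose g : ℝ → ℝ is continuous and ω-periodic. Then the bounded solution x(t) = ∫_t^∞ e^{α(t−s)}(g(s)+g(−s)) ds + ∫_{−∞}^t e^{−α(t−s)}(g(s)+g(−s)) ds + β∫_t^∞ e^{β(t−s)}(−g(s)+g(−s)) ds + β∫_{−∞}^t e^{−β(t−s)}(g(s)−g(−s)) ds of x''(t) + a x(t) + b x(−t) = g(t) is also ω-periodic. -/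
open MeasureTheory

theorem formula_periodic (a b : ℝ) (hb : b ≠ 0) (hab : a < b) (hba : b < -a)
    (α β : ℝ) (hα : α = Real.sqrt (b - a)) (hβ : β = Real.sqrt (-a - b))
    (ω : ℝ) (g : ℝ → ℝ) (hg : Continuous g) (hgper : ∀ t : ℝ, g (t + ω) = g t)
    (x : ℝ → ℝ)
    (hx : ∀ t, x t =
      (∫ s in Set.Ioi t, Real.exp (α * (t - s)) * (g s + g (-s))) +
      (∫ s in Set.Iio t, Real.exp (-α * (t - s)) * (g s + g (-s))) +
      β * (∫ s in Set.Ioi t, Real.exp (β * (t - s)) * (-g s + g (-s))) +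
      β * (∫ s in Set.Iio t, Real.exp (-β * (t - s)) * (g s - g (-s)))) :
    ∀ t : ℝ, x (t + ω) = x t := by
  have shiftIoi : ∀ (c : ℝ) (f : ℝ → ℝ),
      ∫ s in Set.Ioi (c + ω), f s = ∫ s in Set.Ioi c, f (s + ω) := by
    intro c f
    rw [← (measurePreserving_add_right volume ω).setIntegral_preimage_emb
      (measurableEmbedding_addRight ω) f (Set.Ioi (c + ω))]
    congr 1
    ext s; simp
  have shiftIio : ∀ (c : ℝ) (f : ℝ → ℝ),
      ∫ s in Set.Iio (c + ω), f s = ∫ s in Set.Iio c, f (s + ω) := by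
    intro c f
    rw [← (measurePreserving_add_right volume ω).setIntegral_preimage_emb
      (measurableEmbedding_addRight ω) f (Set.Iio (c + ω))]
    congr 1
    ext s; simp
  have hg' : ∀ s : ℝ, g (-(s + ω)) = g (-s) := by
    intro s
    have h := hgper (-s - ω)
    have h1 : -s - ω + ω = -s := by ring
    have h2 : -(s + ω) = -s - ω := by ring
    rw [h2, ← h, h1]
  intro t
  have harith : ∀ s : ℝ, t + ω - (s + ω) = t - s := fun s => by ring
  rw [hx (t + ω), hx t, shiftIoi t _, shiftIio t _, shiftIoi t _, shiftIio t _]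
  simp_rw [harith, hgper, hg']
end

section
/- Every twice differentiable solution x : ℝ → ℝ of the equation x''(t) + 4x(t) + 2x(−t) = cos(2t) is bounded and almost periodic on ℝ. -/
section ReflectionHelpers

lemma refl_cosA (ω : ℝ) (s : ℝ) :
    HasDerivAt (fun t : ℝ => Real.cos (ω * t)) (-(ω * Real.sin (ω * s))) s := by
  have h := (Real.hasDerivAt_cos (ω * s)).comp s ((hasDerivAt_id s).const_mul ω)
  simpa [mul_comm, Function.comp_def] using h

lemma refl_sinA (ω : ℝ) (s : ℝ) :
    HasDerivAt (fun t : ℝ => Real.sin (ω * t)) (ω * Real.cos (ω * s)) s := by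
  have h := (Real.hasDerivAt_sin (ω * s)).comp s ((hasDerivAt_id s).const_mul ω)
  simpa [mul_comm, Function.comp_def] using h

lemma refl_osc (ω : ℝ) (hω : 0 < ω) (f : ℝ → ℝ) (hf : Differentiable ℝ f)
    (hf' : Differentiable ℝ (deriv f))
    (heqo : ∀ t, deriv (deriv f) t = -(ω^2) * f t) (t : ℝ) :
    f t = f 0 * Real.cos (ω * t) + (deriv f 0 / ω) * Real.sin (ω * t) := by
  set A := f 0 with hA
  set B := deriv f 0 / ω with hB
  set c : ℝ → ℝ := fun s => A * Real.cos (ω * s) + B * Real.sin (ω * s) with hc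
  set c1 : ℝ → ℝ := fun s => -(A * ω * Real.sin (ω * s)) + B * ω * Real.cos (ω * s) with hc1
  have hcd : ∀ s, HasDerivAt c (c1 s) s := by
    intro s
    have h := ((refl_cosA ω s).const_mul A).add ((refl_sinA ω s).const_mul B)
    refine h.congr_deriv ?_
    simp only [hc1]; ring
  have hcd2 : ∀ s, HasDerivAt c1 (-(ω^2) * c s) s := by
    intro s
    have h := (((refl_sinA ω s).const_mul (A * ω)).neg).add ((refl_cosA ω s).const_mul (B * ω))
    refine h.congr_deriv ?_
    simp only [hc]; ring
  set g : ℝ → ℝ := fun s => f s - c s with hg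
  set g1 : ℝ → ℝ := fun s => deriv f s - c1 s with hg1
  have hgd : ∀ s, HasDerivAt g (g1 s) s := fun s => (hf s).hasDerivAt.sub (hcd s)
  have hgd2 : ∀ s, HasDerivAt g1 (-(ω^2) * g s) s := by
    intro s
    have h := (hf' s).hasDerivAt.sub (hcd2 s)
    refine h.congr_deriv ?_
    rw [heqo s]; simp only [hg]; ring
  set E : ℝ → ℝ := fun s => (g1 s)^2 + ω^2 * (g s)^2 with hE
  have hEd : ∀ s, HasDerivAt E 0 s := by
    intro s
    have h := ((hgd2 s).pow 2).add (((hgd s).pow 2).const_mul (ω^2))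
    refine h.congr_deriv ?_
    ring
  have hEconst : ∀ s, E s = E 0 :=
    fun s => is_const_of_deriv_eq_zero (fun u => (hEd u).differentiableAt)
      (fun u => (hEd u).deriv) s 0
  have hg0 : g 0 = 0 := by simp [hg, hc, hA]
  have hg10 : g1 0 = 0 := by
    simp only [hg1, hc1]
    rw [hB]
    field_simp
    simp
  have hEt : E t = 0 := by
    rw [hEconst t, hE]; simp [hg0, hg10]
  have hωp : (0:ℝ) < ω^2 := by positivity
  have h1 : (g1 t)^2 + ω^2 * (g t)^2 = 0 := hEt
  have h2 : (g t)^2 = 0 := by nlinarith [sq_nonneg (g1 t), sq_nonneg (g t)]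
  have hgt : g t = 0 := by
    exact pow_eq_zero_iff (n := 2) (by norm_num) |>.mp h2
  simp only [hg, hc, sub_eq_zero] at hgt
  exact hgt

lemma refl_abs_helper (u v p q : ℝ) (hu : |u| ≤ 1) (hv : |v| ≤ 1) :
    |u * p + v * q| ≤ |p| + |q| := by
  calc |u * p + v * q| ≤ |u * p| + |v * q| := abs_add_le _ _
    _ = |u| * |p| + |v| * |q| := by rw [abs_mul, abs_mul]
    _ ≤ 1 * |p| + 1 * |q| := by
        gcongr
    _ = |p| + |q| := by ring

lemma refl_cos_close (b c : ℝ) :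
    |Real.cos (b - c) - 1| ≤ |Real.cos b - Real.cos c| + |Real.sin b - Real.sin c| := by
  have e : Real.cos (b - c) - 1
      = Real.cos c * (Real.cos b - Real.cos c) + Real.sin c * (Real.sin b - Real.sin c) := by
    rw [Real.cos_sub]; nlinarith [Real.sin_sq_add_cos_sq c]
  rw [e]
  exact refl_abs_helper _ _ _ _ (Real.abs_cos_le_one c) (Real.abs_sin_le_one c)

lemma refl_sin_close (b c : ℝ) :
    |Real.sin (b - c)| ≤ |Real.cos b - Real.cos c| + |Real.sin b - Real.sin c| := by
  have e : Real.sin (b - c)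
      = (-Real.sin c) * (Real.cos b - Real.cos c) + Real.cos c * (Real.sin b - Real.sin c) := by
    rw [Real.sin_sub]; ring
  rw [e]
  have := refl_abs_helper (-Real.sin c) (Real.cos c) (Real.cos b - Real.cos c)
    (Real.sin b - Real.sin c) (by rw [abs_neg]; exact Real.abs_sin_le_one c) (Real.abs_cos_le_one c)
  linarith [this]

lemma cos_shift (a b c : ℝ) :
    |Real.cos (a + (b - c)) - Real.cos a|
      ≤ 2 * (|Real.cos b - Real.cos c| + |Real.sin b - Real.sin c|) := by
  have e : Real.cos (a + (b - c)) - Real.cos a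
      = Real.cos a * (Real.cos (b - c) - 1) + (-Real.sin a) * Real.sin (b - c) := by
    rw [Real.cos_add]; ring
  rw [e]
  have h := refl_abs_helper (Real.cos a) (-Real.sin a) (Real.cos (b - c) - 1) (Real.sin (b - c))
    (Real.abs_cos_le_one a) (by rw [abs_neg]; exact Real.abs_sin_le_one a)
  linarith [h, refl_cos_close b c, refl_sin_close b c]

lemma sin_shift (a b c : ℝ) :
    |Real.sin (a + (b - c)) - Real.sin a|
      ≤ 2 * (|Real.cos b - Real.cos c| + |Real.sin b - Real.sin c|) := by
  have e : Real.sin (a + (b - c)) - Real.sin a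
      = Real.sin a * (Real.cos (b - c) - 1) + Real.cos a * Real.sin (b - c) := by
    rw [Real.sin_add]; ring
  rw [e]
  have h := refl_abs_helper (Real.sin a) (Real.cos a) (Real.cos (b - c) - 1) (Real.sin (b - c))
    (Real.abs_sin_le_one a) (Real.abs_cos_le_one a)
  linarith [h, refl_cos_close b c, refl_sin_close b c]

end ReflectionHelpers

lemma rel_dense (C D : ℝ) (x : ℝ → ℝ)
    (hform : ∀ t, x t = C * Real.cos (Real.sqrt 6 * t) + D * Real.sin (Real.sqrt 2 * t)
      + Real.cos (2 * t) / 2)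
    (ε : ℝ) (hε : 0 < ε) :
    RelativelyDense {τ : ℝ | ∀ t, |x (t + τ) - x t| < ε} := by
  have hden : (0:ℝ) < 4 * (|C| + |D| + 1) := by positivity
  set δ : ℝ := ε / (4 * (|C| + |D| + 1)) with hδdef
  have hδ : 0 < δ := div_pos hε hden
  set F : ℝ → Fin 6 → ℝ := fun t =>
    ![Real.cos (Real.sqrt 6 * t), Real.sin (Real.sqrt 6 * t),
      Real.cos (Real.sqrt 2 * t), Real.sin (Real.sqrt 2 * t),
      Real.cos (2 * t), Real.sin (2 * t)] with hF
  have hsub : Set.range F ⊆ Metric.closedBall (0 : Fin 6 → ℝ) 1 := by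
    rintro _ ⟨t, rfl⟩
    rw [Metric.mem_closedBall]
    rw [dist_pi_le_iff (by norm_num)]
    intro i
    fin_cases i
    · show dist (Real.cos (Real.sqrt 6 * t)) 0 ≤ 1
      rw [Real.dist_0_eq_abs]; exact Real.abs_cos_le_one _
    · show dist (Real.sin (Real.sqrt 6 * t)) 0 ≤ 1
      rw [Real.dist_0_eq_abs]; exact Real.abs_sin_le_one _
    · show dist (Real.cos (Real.sqrt 2 * t)) 0 ≤ 1
      rw [Real.dist_0_eq_abs]; exact Real.abs_cos_le_one _
    · show dist (Real.sin (Real.sqrt 2 * t)) 0 ≤ 1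
      rw [Real.dist_0_eq_abs]; exact Real.abs_sin_le_one _
    · show dist (Real.cos (2 * t)) 0 ≤ 1
      rw [Real.dist_0_eq_abs]; exact Real.abs_cos_le_one _
    · show dist (Real.sin (2 * t)) 0 ≤ 1
      rw [Real.dist_0_eq_abs]; exact Real.abs_sin_le_one _
  have htb : TotallyBounded (Set.range F) :=
    (isCompact_closedBall (0 : Fin 6 → ℝ) 1).totallyBounded.subset hsub
  obtain ⟨Y, hYsub, hYfin, hYcov⟩ := Metric.finite_approx_of_totallyBounded htb δ hδ
  have hch : ∀ y ∈ Y, ∃ r : ℝ, F r = y := fun y hy => hYsub hy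
  choose! r hr using hch
  set s : Finset (Fin 6 → ℝ) := hYfin.toFinset with hs
  have hne : s.Nonempty := by
    have h0 : F 0 ∈ ⋃ y ∈ Y, Metric.ball y δ := hYcov (Set.mem_range_self 0)
    obtain ⟨y, hy, -⟩ := Set.mem_iUnion₂.1 h0
    exact ⟨y, hYfin.mem_toFinset.2 hy⟩
  set T : ℝ := s.sup' hne (fun y => |r y|) with hT
  have hT0 : 0 ≤ T := by
    obtain ⟨y, hy⟩ := hne
    exact le_trans (abs_nonneg (r y)) (Finset.le_sup' (fun y => |r y|) hy)
  refine ⟨2 * T + 1, by linarith, fun x0 => ?_⟩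
  set p : ℝ := x0 + T + 1/2 with hp
  have hpc : F p ∈ ⋃ y ∈ Y, Metric.ball y δ := hYcov (Set.mem_range_self p)
  obtain ⟨y, hy, hball⟩ := Set.mem_iUnion₂.1 hpc
  set q : ℝ := r y with hq
  have hFq : F q = y := hr y hy
  have hqT : |q| ≤ T := Finset.le_sup' (fun y => |r y|) (hYfin.mem_toFinset.2 hy)
  have hqT' := abs_le.1 hqT
  refine ⟨p - q, ?_, ?_⟩
  · -- almost period
    rw [← hFq] at hball
    rw [Metric.mem_ball] at hball
    have hcomp : ∀ i, |F p i - F q i| < δ := by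
      intro i
      have h := dist_le_pi_dist (F p) (F q) i
      rw [Real.dist_eq] at h
      exact lt_of_le_of_lt h hball
    have h0 : |Real.cos (Real.sqrt 6 * p) - Real.cos (Real.sqrt 6 * q)| < δ := by
      exact hcomp 0
    have h1 : |Real.sin (Real.sqrt 6 * p) - Real.sin (Real.sqrt 6 * q)| < δ := by
      exact hcomp 1
    have h2 : |Real.cos (Real.sqrt 2 * p) - Real.cos (Real.sqrt 2 * q)| < δ := by
      exact hcomp 2
    have h3 : |Real.sin (Real.sqrt 2 * p) - Real.sin (Real.sqrt 2 * q)| < δ := by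
      exact hcomp 3
    have h4 : |Real.cos (2 * p) - Real.cos (2 * q)| < δ := by
      exact hcomp 4
    have h5 : |Real.sin (2 * p) - Real.sin (2 * q)| < δ := by
      exact hcomp 5
    intro t
    have e6 : Real.sqrt 6 * (t + (p - q)) = Real.sqrt 6 * t + (Real.sqrt 6 * p - Real.sqrt 6 * q) := by ring
    have e2 : Real.sqrt 2 * (t + (p - q)) = Real.sqrt 2 * t + (Real.sqrt 2 * p - Real.sqrt 2 * q) := by ring
    have e1 : 2 * (t + (p - q)) = 2 * t + (2 * p - 2 * q) := by ring
    have hb6 : |Real.cos (Real.sqrt 6 * (t + (p - q))) - Real.cos (Real.sqrt 6 * t)| ≤ 4 * δ := by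
      rw [e6]
      have := cos_shift (Real.sqrt 6 * t) (Real.sqrt 6 * p) (Real.sqrt 6 * q)
      linarith
    have hb2 : |Real.sin (Real.sqrt 2 * (t + (p - q))) - Real.sin (Real.sqrt 2 * t)| ≤ 4 * δ := by
      rw [e2]
      have := sin_shift (Real.sqrt 2 * t) (Real.sqrt 2 * p) (Real.sqrt 2 * q)
      linarith
    have hb1 : |Real.cos (2 * (t + (p - q))) - Real.cos (2 * t)| ≤ 4 * δ := by
      rw [e1]
      have := cos_shift (2 * t) (2 * p) (2 * q)
      linarith
    have hsplit : |x (t + (p - q)) - x t|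
        ≤ |C| * |Real.cos (Real.sqrt 6 * (t + (p - q))) - Real.cos (Real.sqrt 6 * t)|
          + |D| * |Real.sin (Real.sqrt 2 * (t + (p - q))) - Real.sin (Real.sqrt 2 * t)|
          + |Real.cos (2 * (t + (p - q))) - Real.cos (2 * t)| / 2 := by
      rw [hform, hform]
      have e : C * Real.cos (Real.sqrt 6 * (t + (p - q))) + D * Real.sin (Real.sqrt 2 * (t + (p - q)))
          + Real.cos (2 * (t + (p - q))) / 2
          - (C * Real.cos (Real.sqrt 6 * t) + D * Real.sin (Real.sqrt 2 * t) + Real.cos (2 * t) / 2)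
          = C * (Real.cos (Real.sqrt 6 * (t + (p - q))) - Real.cos (Real.sqrt 6 * t))
          + D * (Real.sin (Real.sqrt 2 * (t + (p - q))) - Real.sin (Real.sqrt 2 * t))
          + (Real.cos (2 * (t + (p - q))) - Real.cos (2 * t)) / 2 := by ring
      rw [e]
      calc |C * (Real.cos (Real.sqrt 6 * (t + (p - q))) - Real.cos (Real.sqrt 6 * t))
          + D * (Real.sin (Real.sqrt 2 * (t + (p - q))) - Real.sin (Real.sqrt 2 * t))
          + (Real.cos (2 * (t + (p - q))) - Real.cos (2 * t)) / 2|
          ≤ |C * (Real.cos (Real.sqrt 6 * (t + (p - q))) - Real.cos (Real.sqrt 6 * t))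
          + D * (Real.sin (Real.sqrt 2 * (t + (p - q))) - Real.sin (Real.sqrt 2 * t))|
          + |(Real.cos (2 * (t + (p - q))) - Real.cos (2 * t)) / 2| := abs_add_le _ _
        _ ≤ |C * (Real.cos (Real.sqrt 6 * (t + (p - q))) - Real.cos (Real.sqrt 6 * t))|
          + |D * (Real.sin (Real.sqrt 2 * (t + (p - q))) - Real.sin (Real.sqrt 2 * t))|
          + |(Real.cos (2 * (t + (p - q))) - Real.cos (2 * t)) / 2| := by
            have := abs_add_le (C * (Real.cos (Real.sqrt 6 * (t + (p - q))) - Real.cos (Real.sqrt 6 * t)))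
              (D * (Real.sin (Real.sqrt 2 * (t + (p - q))) - Real.sin (Real.sqrt 2 * t)))
            linarith
        _ = |C| * |Real.cos (Real.sqrt 6 * (t + (p - q))) - Real.cos (Real.sqrt 6 * t)|
          + |D| * |Real.sin (Real.sqrt 2 * (t + (p - q))) - Real.sin (Real.sqrt 2 * t)|
          + |Real.cos (2 * (t + (p - q))) - Real.cos (2 * t)| / 2 := by
            rw [abs_mul, abs_mul, abs_div]
            norm_num
    have hC4 : |C| * |Real.cos (Real.sqrt 6 * (t + (p - q))) - Real.cos (Real.sqrt 6 * t)| ≤ |C| * (4 * δ) :=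
      mul_le_mul_of_nonneg_left hb6 (abs_nonneg C)
    have hD4 : |D| * |Real.sin (Real.sqrt 2 * (t + (p - q))) - Real.sin (Real.sqrt 2 * t)| ≤ |D| * (4 * δ) :=
      mul_le_mul_of_nonneg_left hb2 (abs_nonneg D)
    have hεeq : 4 * δ * (|C| + |D| + 1) = ε := by
      rw [hδdef]; field_simp
    nlinarith [hsplit, hC4, hD4, hb1, hδ]
  · constructor <;> simp only [hp] <;> linarith

theorem reflection_example_bounded (x : ℝ → ℝ)
    (hx1 : Differentiable ℝ x) (hx2 : Differentiable ℝ (deriv x))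
    (heq : ∀ t : ℝ, deriv (deriv x) t + 4 * x t + 2 * x (-t) = Real.cos (2 * t)) :
    (∃ M : ℝ, ∀ t : ℝ, |x t| ≤ M) ∧ AlmostPeriodic x := by
  -- derivative of the reflected functions
  have hxneg : ∀ t : ℝ, HasDerivAt (fun s => x (-s)) (-(deriv x (-t))) t := by
    intro t
    have h := ((hx1 (-t)).hasDerivAt).comp t (hasDerivAt_neg t)
    simpa [mul_comm, Function.comp_def] using h
  have hx'neg : ∀ t : ℝ, HasDerivAt (fun s => deriv x (-s)) (-(deriv (deriv x) (-t))) t := by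
    intro t
    have h := ((hx2 (-t)).hasDerivAt).comp t (hasDerivAt_neg t)
    simpa [mul_comm, Function.comp_def] using h
  -- even part minus the particular solution
  set w : ℝ → ℝ := fun t => (x t + x (-t)) / 2 - Real.cos (2 * t) / 2 with hw
  set w1 : ℝ → ℝ := fun t => (deriv x t - deriv x (-t)) / 2 + Real.sin (2 * t) with hw1
  have hwd : ∀ t, HasDerivAt w (w1 t) t := by
    intro t
    have h := (((hx1 t).hasDerivAt.add (hxneg t)).div_const 2).sub
      ((refl_cosA 2 t).div_const 2)
    refine h.congr_deriv ?_
    simp only [hw1]; ring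
  have hderivw : deriv w = w1 := funext fun t => (hwd t).deriv
  have hwd2 : ∀ t, HasDerivAt w1
      ((deriv (deriv x) t + deriv (deriv x) (-t)) / 2 + 2 * Real.cos (2 * t)) t := by
    intro t
    have h := (((hx2 t).hasDerivAt.sub (hx'neg t)).div_const 2).add (refl_sinA 2 t)
    refine h.congr_deriv ?_
    ring
  have heqw : ∀ t, deriv (deriv w) t = -((Real.sqrt 6)^2) * w t := by
    intro t
    rw [hderivw, (hwd2 t).deriv]
    have h1 := heq t
    have h2 := heq (-t)
    rw [neg_neg] at h2
    rw [show (2:ℝ) * -t = -(2*t) by ring, Real.cos_neg] at h2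
    rw [Real.sq_sqrt (by norm_num : (0:ℝ) ≤ 6)]
    simp only [hw]
    linarith
  -- odd part
  set v : ℝ → ℝ := fun t => (x t - x (-t)) / 2 with hv
  set v1 : ℝ → ℝ := fun t => (deriv x t + deriv x (-t)) / 2 with hv1
  have hvd : ∀ t, HasDerivAt v (v1 t) t := by
    intro t
    have h := ((hx1 t).hasDerivAt.sub (hxneg t)).div_const 2
    refine h.congr_deriv ?_
    simp only [hv1]; ring
  have hderivv : deriv v = v1 := funext fun t => (hvd t).deriv
  have hvd2 : ∀ t, HasDerivAt v1
      ((deriv (deriv x) t - deriv (deriv x) (-t)) / 2) t := by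
    intro t
    have h := ((hx2 t).hasDerivAt.add (hx'neg t)).div_const 2
    exact h.congr_deriv (by ring)
  have heqv : ∀ t, deriv (deriv v) t = -((Real.sqrt 2)^2) * v t := by
    intro t
    rw [hderivv, (hvd2 t).deriv]
    have h1 := heq t
    have h2 := heq (-t)
    rw [neg_neg] at h2
    rw [show (2:ℝ) * -t = -(2*t) by ring, Real.cos_neg] at h2
    rw [Real.sq_sqrt (by norm_num : (0:ℝ) ≤ 2)]
    simp only [hv]
    linarith
  have h6pos : (0:ℝ) < Real.sqrt 6 := Real.sqrt_pos.2 (by norm_num)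
  have h2pos : (0:ℝ) < Real.sqrt 2 := Real.sqrt_pos.2 (by norm_num)
  have hwform := refl_osc (Real.sqrt 6) h6pos w
    (fun t => (hwd t).differentiableAt)
    (by rw [hderivw]; exact fun t => (hwd2 t).differentiableAt)
    heqw
  have hvform := refl_osc (Real.sqrt 2) h2pos v
    (fun t => (hvd t).differentiableAt)
    (by rw [hderivv]; exact fun t => (hvd2 t).differentiableAt)
    heqv
  have hw0 : w 0 = x 0 - 1/2 := by simp [hw]
  have hw10 : deriv w 0 = 0 := by rw [hderivw]; simp [hw1]
  have hv0 : v 0 = 0 := by simp [hv]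
  have hv10 : deriv v 0 = deriv x 0 := by rw [hderivv]; simp [hv1]
  set C : ℝ := x 0 - 1/2 with hC
  set D : ℝ := deriv x 0 / Real.sqrt 2 with hD
  have hform : ∀ t, x t = C * Real.cos (Real.sqrt 6 * t) + D * Real.sin (Real.sqrt 2 * t)
      + Real.cos (2 * t) / 2 := by
    intro t
    have hwt := hwform t
    have hvt := hvform t
    rw [hw0, hw10] at hwt
    rw [hv0, hv10] at hvt
    have hx : x t = w t + Real.cos (2 * t) / 2 + v t := by
      simp only [hw, hv]; ring
    rw [hx, hwt, hvt]
    simp only [hC, hD]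
    ring
  constructor
  · -- boundedness
    refine ⟨|C| + |D| + 1/2, fun t => ?_⟩
    rw [hform t]
    have ha := abs_add_le (C * Real.cos (Real.sqrt 6 * t) + D * Real.sin (Real.sqrt 2 * t))
      (Real.cos (2 * t) / 2)
    have hb := abs_add_le (C * Real.cos (Real.sqrt 6 * t)) (D * Real.sin (Real.sqrt 2 * t))
    rw [abs_mul] at hb
    rw [abs_mul (D) _] at hb
    have hc1 : |C| * |Real.cos (Real.sqrt 6 * t)| ≤ |C| * 1 :=
      mul_le_mul_of_nonneg_left (Real.abs_cos_le_one _) (abs_nonneg C)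
    have hc2 : |D| * |Real.sin (Real.sqrt 2 * t)| ≤ |D| * 1 :=
      mul_le_mul_of_nonneg_left (Real.abs_sin_le_one _) (abs_nonneg D)
    have hc3 : |Real.cos (2 * t) / 2| ≤ 1/2 := by
      rw [abs_div]
      have := Real.abs_cos_le_one (2 * t)
      rw [abs_of_pos (by norm_num : (0:ℝ) < 2)]
      linarith
    linarith
  · exact ⟨hx1.continuous, fun ε hε => rel_dense C D x hform ε hε⟩
end

section
/- Let a, b ∈ ℝ with −a < b < a, and set μ = √(a−b), ν = √(a+b). Every twice differentiable solution of the homogeneous equation x''(t) + a·x(t) + b·x(−t) = 0 on ℝ has the form x(t) = k₁ sin(μt) + k₂ cos(νt) for some constants k₁, k₂ ∈ ℝ; conversely every such function is a solution. In particular every solution of the homogeneous equation is bounded and almost periodic. -/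
lemma hgs_abs_cos_sub_cos_le (p q : ℝ) : |Real.cos p - Real.cos q| ≤ |p - q| := by
  rw [Real.cos_sub_cos]
  have h1 : |Real.sin ((p+q)/2)| ≤ 1 := Real.abs_sin_le_one _
  have h2 : |Real.sin ((p-q)/2)| ≤ |(p-q)/2| := Real.abs_sin_le_abs
  have h3 : |(p-q)/2| = |p-q|/2 := by rw [abs_div]; norm_num
  have h4 : (0:ℝ) ≤ |Real.sin ((p+q)/2)| := abs_nonneg _
  have h5 : (0:ℝ) ≤ |Real.sin ((p-q)/2)| := abs_nonneg _
  calc |(-2) * Real.sin ((p+q)/2) * Real.sin ((p-q)/2)|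
      = 2 * (|Real.sin ((p+q)/2)| * |Real.sin ((p-q)/2)|) := by
        rw [abs_mul, abs_mul]; norm_num; ring
    _ ≤ 2 * (1 * (|p-q|/2)) := by
        have := h3 ▸ h2
        gcongr
    _ = |p - q| := by ring

lemma hgs_trig_hasDerivAt (c₁ c₂ α β t : ℝ) :
    HasDerivAt (fun s : ℝ => c₁ * Real.sin (α * s) + c₂ * Real.cos (β * s))
      (-(c₂ * β) * Real.sin (β * t) + c₁ * α * Real.cos (α * t)) t := by
  have h1 : HasDerivAt (fun s : ℝ => α * s) α t := by
    simpa using (hasDerivAt_id t).const_mul α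
  have h2 : HasDerivAt (fun s : ℝ => β * s) β t := by
    simpa using (hasDerivAt_id t).const_mul β
  have hs : HasDerivAt (fun s : ℝ => Real.sin (α * s)) (Real.cos (α * t) * α) t := by
    simpa [Function.comp_def] using (Real.hasDerivAt_sin (α * t)).comp t h1
  have hc : HasDerivAt (fun s : ℝ => Real.cos (β * s)) (-Real.sin (β * t) * β) t := by
    simpa [Function.comp_def] using (Real.hasDerivAt_cos (β * t)).comp t h2
  have := (hs.const_mul c₁).add (hc.const_mul c₂)
  exact this.congr_deriv (by ring)

lemma hgs_trig_deriv (c₁ c₂ α β : ℝ) :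
    deriv (fun s : ℝ => c₁ * Real.sin (α * s) + c₂ * Real.cos (β * s))
      = fun t => -(c₂ * β) * Real.sin (β * t) + c₁ * α * Real.cos (α * t) :=
  funext fun t => (hgs_trig_hasDerivAt c₁ c₂ α β t).deriv

lemma hgs_trig_diff (c₁ c₂ α β : ℝ) :
    Differentiable ℝ (fun s : ℝ => c₁ * Real.sin (α * s) + c₂ * Real.cos (β * s)) :=
  fun t => (hgs_trig_hasDerivAt c₁ c₂ α β t).differentiableAt

lemma hgs_ode_zero (ω : ℝ) (hω : 0 < ω) (u : ℝ → ℝ)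
    (hu : Differentiable ℝ u) (hu' : Differentiable ℝ (deriv u))
    (heq : ∀ t, deriv (deriv u) t = -(ω^2) * u t)
    (h0 : u 0 = 0) (h0' : deriv u 0 = 0) : ∀ t, u t = 0 := by
  have hE : ∀ s : ℝ, HasDerivAt (fun r => (deriv u r)^2 + ω^2 * (u r)^2)
      (((2:ℕ) * (deriv u s)^(2-1) * (deriv (deriv u) s)) + ω^2 * ((2:ℕ) * (u s)^(2-1) * deriv u s)) s := by
    intro s
    exact (((hu' s).hasDerivAt).pow 2).add ((((hu s).hasDerivAt).pow 2).const_mul (ω^2))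
  have hEconst : ∀ t : ℝ, (deriv u t)^2 + ω^2 * (u t)^2 = (deriv u 0)^2 + ω^2 * (u 0)^2 := by
    intro t
    apply is_const_of_deriv_eq_zero (f := fun r => (deriv u r)^2 + ω^2 * (u r)^2)
    · exact fun s => (hE s).differentiableAt
    · intro s
      rw [(hE s).deriv, heq s]
      push_cast
      ring
  intro t
  have h := hEconst t
  rw [h0, h0'] at h
  have h3 : (u t)^2 = 0 := by nlinarith [sq_nonneg (deriv u t), sq_nonneg (u t), pow_pos hω 2]
  exact pow_eq_zero_iff (two_ne_zero) |>.mp h3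

lemma hgs_ode_form (ω : ℝ) (hω : 0 < ω) (u : ℝ → ℝ)
    (hu : Differentiable ℝ u) (hu' : Differentiable ℝ (deriv u))
    (heq : ∀ t, deriv (deriv u) t = -(ω^2) * u t) :
    ∀ t, u t = (deriv u 0 / ω) * Real.sin (ω * t) + u 0 * Real.cos (ω * t) := by
  set c₁ := deriv u 0 / ω with hc₁
  set c₂ := u 0 with hc₂
  set g : ℝ → ℝ := fun s : ℝ => c₁ * Real.sin (ω * s) + c₂ * Real.cos (ω * s) with hg
  have hgd : ∀ t, HasDerivAt g (-(c₂*ω) * Real.sin (ω*t) + c₁*ω*Real.cos (ω*t)) t :=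
    fun t => hgs_trig_hasDerivAt c₁ c₂ ω ω t
  have hw1 : ∀ t, HasDerivAt (fun s => u s - g s)
      (deriv u t - (-(c₂*ω) * Real.sin (ω*t) + c₁*ω*Real.cos (ω*t))) t :=
    fun t => ((hu t).hasDerivAt).sub (hgd t)
  have hwderiv : deriv (fun s => u s - g s)
      = fun t => deriv u t - (-(c₂*ω) * Real.sin (ω*t) + c₁*ω*Real.cos (ω*t)) :=
    funext fun t => (hw1 t).deriv
  have hw2 : ∀ t, HasDerivAt (deriv (fun s => u s - g s))
      (deriv (deriv u) t - (-((c₁*ω)*ω) * Real.sin (ω*t) + (-(c₂*ω))*ω * Real.cos (ω*t))) t := by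
    intro t
    rw [hwderiv]
    exact ((hu' t).hasDerivAt).sub (hgs_trig_hasDerivAt (-(c₂*ω)) (c₁*ω) ω ω t)
  have hweq : ∀ t, deriv (deriv (fun s => u s - g s)) t = -(ω^2) * (fun s => u s - g s) t := by
    intro t
    rw [(hw2 t).deriv, heq t]
    simp only [hg]
    ring
  have hzero := hgs_ode_zero ω hω (fun s => u s - g s)
    (fun t => (hw1 t).differentiableAt) (fun t => (hw2 t).differentiableAt) hweq
    (by simp [hg, hc₂]) (by rw [hwderiv]; simp [hc₁]; field_simp; simp)
  intro t
  have := hzero t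
  have hgt : u t - g t = 0 := this
  simp only [hg] at hgt
  linarith [hgt]

lemma hgs_key_dense (α δ : ℝ) (hδ : 0 < δ) :
    ∃ Q : ℤ, 0 < Q ∧ ∃ G : ℝ, 0 < G ∧ ∀ j₀ : ℤ, ∃ j m : ℤ,
      (j₀ : ℝ) ≤ (j : ℝ) ∧ (j : ℝ) ≤ (j₀ : ℝ) + G ∧ |(j : ℝ) * ((Q : ℝ) * α) - (m : ℝ)| < δ := by
  obtain ⟨n, hn⟩ := exists_nat_gt (1/δ)
  obtain ⟨p, q, hq0, hqn, hpq⟩ := Real.exists_int_int_abs_mul_sub_le α (Nat.succ_pos n)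
  have hβδ : |(q:ℝ) * α - p| < δ := by
    refine lt_of_le_of_lt hpq ?_
    rw [div_lt_iff₀ (by positivity)]
    rw [div_lt_iff₀ hδ] at hn
    push_cast
    nlinarith [hδ]
  set β : ℝ := (q:ℝ) * α - p with hβ
  rcases eq_or_ne β 0 with hb0 | hb0
  · refine ⟨q, hq0, 1, one_pos, fun j₀ => ⟨j₀, j₀ * p, le_refl _, by linarith, ?_⟩⟩
    have hqα : (q:ℝ) * α = p := by rw [hβ] at hb0; linarith
    rw [hqα]
    push_cast
    simpa using hδ
  · have hγ : 0 < |β| := abs_pos.mpr hb0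
    have hγδ : |β| < δ := hβδ
    refine ⟨q, hq0, 1/|β| + 2, by positivity, fun j₀ => ?_⟩
    set N : ℤ := ⌈(j₀:ℝ) * |β|⌉ with hN
    set j : ℤ := ⌈(N:ℝ)/|β|⌉ with hj
    have hNa : (j₀:ℝ) * |β| ≤ N := Int.le_ceil _
    have hNb : (N:ℝ) < (j₀:ℝ) * |β| + 1 := Int.ceil_lt_add_one _
    have hja : (N:ℝ)/|β| ≤ j := Int.le_ceil _
    have hjb : (j:ℝ) < (N:ℝ)/|β| + 1 := Int.ceil_lt_add_one _
    have hj₀j : (j₀:ℝ) ≤ j := by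
      have : (j₀:ℝ) ≤ (N:ℝ)/|β| := (le_div_iff₀ hγ).mpr hNa
      linarith
    have hjub : (j:ℝ) ≤ (j₀:ℝ) + (1/|β| + 2) := by
      have h1 : (N:ℝ)/|β| < ((j₀:ℝ) * |β| + 1)/|β| := by gcongr
      have h2 : ((j₀:ℝ) * |β| + 1)/|β| = (j₀:ℝ) + 1/|β| := by field_simp
      linarith
    have hc1 : (N:ℝ) ≤ (j:ℝ) * |β| := (div_le_iff₀ hγ).mp hja
    have hc2 : (j:ℝ) * |β| < (N:ℝ) + |β| := by
      have h := mul_lt_mul_of_pos_right hjb hγ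
      rw [add_mul, one_mul, div_mul_cancel₀ _ (ne_of_gt hγ)] at h
      exact h
    rcases le_or_gt 0 β with hbs | hbs
    · have habs : |β| = β := abs_of_nonneg hbs
      rw [habs] at hc1 hc2 hγδ
      refine ⟨j, j * p + N, hj₀j, hjub, ?_⟩
      have hqα : (q:ℝ) * α = (p:ℝ) + β := by rw [hβ]; ring
      rw [hqα]
      push_cast
      rw [abs_lt]
      constructor <;> nlinarith [hc1, hc2, hγδ, habs]
    · have habs : |β| = -β := abs_of_neg hbs
      rw [habs] at hc1 hc2 hγδ
      refine ⟨j, j * p - N, hj₀j, hjub, ?_⟩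
      have hqα : (q:ℝ) * α = (p:ℝ) + β := by rw [hβ]; ring
      rw [hqα]
      push_cast
      rw [abs_lt]
      constructor <;> nlinarith [hc1, hc2, hγδ, habs]

theorem homogeneous_general_solution (a b : ℝ) (hba : -a < b) (hab : b < a)
    (μ ν : ℝ) (hμ : μ = Real.sqrt (a - b)) (hν : ν = Real.sqrt (a + b)) :
    (∀ x : ℝ → ℝ, Differentiable ℝ x → Differentiable ℝ (deriv x) →
      (∀ t : ℝ, deriv (deriv x) t + a * x t + b * x (-t) = 0) →
      ∃ k₁ k₂ : ℝ, ∀ t : ℝ, x t = k₁ * Real.sin (μ * t) + k₂ * Real.cos (ν * t)) ∧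
    (∀ k₁ k₂ : ℝ,
      (Differentiable ℝ fun t : ℝ => k₁ * Real.sin (μ * t) + k₂ * Real.cos (ν * t)) ∧
      (Differentiable ℝ (deriv fun t : ℝ => k₁ * Real.sin (μ * t) + k₂ * Real.cos (ν * t))) ∧
      ∀ t : ℝ, deriv (deriv fun s : ℝ => k₁ * Real.sin (μ * s) + k₂ * Real.cos (ν * s)) t +
        a * (k₁ * Real.sin (μ * t) + k₂ * Real.cos (ν * t)) +
        b * (k₁ * Real.sin (μ * -t) + k₂ * Real.cos (ν * -t)) = 0) ∧
    (∀ x : ℝ → ℝ, Differentiable ℝ x → Differentiable ℝ (deriv x) →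
      (∀ t : ℝ, deriv (deriv x) t + a * x t + b * x (-t) = 0) →
      (∃ M : ℝ, ∀ t : ℝ, |x t| ≤ M) ∧ AlmostPeriodic x) := by
  have hab1 : 0 < a - b := by linarith
  have hab2 : 0 < a + b := by linarith
  have hμpos : 0 < μ := hμ ▸ Real.sqrt_pos.mpr hab1
  have hνpos : 0 < ν := hν ▸ Real.sqrt_pos.mpr hab2
  have hμ2 : μ^2 = a - b := by rw [hμ]; exact Real.sq_sqrt hab1.le
  have hν2 : ν^2 = a + b := by rw [hν]; exact Real.sq_sqrt hab2.le
  have part1 : ∀ x : ℝ → ℝ, Differentiable ℝ x → Differentiable ℝ (deriv x) →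
      (∀ t : ℝ, deriv (deriv x) t + a * x t + b * x (-t) = 0) →
      ∃ k₁ k₂ : ℝ, ∀ t : ℝ, x t = k₁ * Real.sin (μ * t) + k₂ * Real.cos (ν * t) := by
    intro x hx1 hx2 heq
    have hcompneg : ∀ (f : ℝ → ℝ), Differentiable ℝ f → ∀ t : ℝ,
        HasDerivAt (fun s => f (-s)) (-(deriv f (-t))) t := by
      intro f hf t
      have h := ((hf (-t)).hasDerivAt).comp t (hasDerivAt_neg t)
      simpa [Function.comp_def] using h
    -- odd part z
    have hz1 : ∀ t : ℝ, HasDerivAt (fun s => (x s - x (-s))/2)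
        ((deriv x t + deriv x (-t))/2) t := by
      intro t
      have := (((hx1 t).hasDerivAt).sub (hcompneg x hx1 t)).div_const 2
      exact this.congr_deriv (by ring)
    have hzderiv : deriv (fun s => (x s - x (-s))/2)
        = fun t => (deriv x t + deriv x (-t))/2 := funext fun t => (hz1 t).deriv
    have hz2 : ∀ t : ℝ, HasDerivAt (deriv (fun s => (x s - x (-s))/2))
        ((deriv (deriv x) t - deriv (deriv x) (-t))/2) t := by
      intro t
      rw [hzderiv]
      have := (((hx2 t).hasDerivAt).add (hcompneg (deriv x) hx2 t)).div_const 2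
      exact this.congr_deriv (by ring)
    have hzeq : ∀ t : ℝ, deriv (deriv (fun s => (x s - x (-s))/2)) t
        = -(μ^2) * (fun s => (x s - x (-s))/2) t := by
      intro t
      have h1 := heq t
      have h2 := heq (-t)
      rw [neg_neg] at h2
      rw [(hz2 t).deriv, hμ2]
      simp only
      linear_combination (h1 - h2)/2
    -- even part y
    have hy1 : ∀ t : ℝ, HasDerivAt (fun s => (x s + x (-s))/2)
        ((deriv x t - deriv x (-t))/2) t := by
      intro t
      have := (((hx1 t).hasDerivAt).add (hcompneg x hx1 t)).div_const 2
      exact this.congr_deriv (by ring)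
    have hyderiv : deriv (fun s => (x s + x (-s))/2)
        = fun t => (deriv x t - deriv x (-t))/2 := funext fun t => (hy1 t).deriv
    have hy2 : ∀ t : ℝ, HasDerivAt (deriv (fun s => (x s + x (-s))/2))
        ((deriv (deriv x) t + deriv (deriv x) (-t))/2) t := by
      intro t
      rw [hyderiv]
      have := (((hx2 t).hasDerivAt).sub (hcompneg (deriv x) hx2 t)).div_const 2
      exact this.congr_deriv (by ring)
    have hyeq : ∀ t : ℝ, deriv (deriv (fun s => (x s + x (-s))/2)) t
        = -(ν^2) * (fun s => (x s + x (-s))/2) t := by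
      intro t
      have h1 := heq t
      have h2 := heq (-t)
      rw [neg_neg] at h2
      rw [(hy2 t).deriv, hν2]
      simp only
      linear_combination (h1 + h2)/2
    have hzf := hgs_ode_form μ hμpos (fun s => (x s - x (-s))/2)
      (fun t => (hz1 t).differentiableAt) (fun t => (hz2 t).differentiableAt) hzeq
    have hyf := hgs_ode_form ν hνpos (fun s => (x s + x (-s))/2)
      (fun t => (hy1 t).differentiableAt) (fun t => (hy2 t).differentiableAt) hyeq
    have hz0 : (fun s => (x s - x (-s))/2) 0 = 0 := by simp
    have hdz0 : deriv (fun s => (x s - x (-s))/2) 0 = deriv x 0 := by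
      rw [hzderiv]; simp
    have hy0 : (fun s => (x s + x (-s))/2) 0 = x 0 := by simp
    have hdy0 : deriv (fun s => (x s + x (-s))/2) 0 = 0 := by
      rw [hyderiv]; simp
    refine ⟨deriv x 0 / μ, x 0, fun t => ?_⟩
    have h1 := hzf t
    have h2 := hyf t
    rw [hdz0] at h1
    rw [hdy0] at h2
    simp only [neg_zero] at h1 h2
    have hxt : x t = (x t - x (-t))/2 + (x t + x (-t))/2 := by ring
    rw [hxt, h1, h2]
    ring
  refine ⟨part1, ?_, ?_⟩
  · intro k₁ k₂
    refine ⟨hgs_trig_diff k₁ k₂ μ ν, ?_, ?_⟩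
    · rw [hgs_trig_deriv k₁ k₂ μ ν]
      exact hgs_trig_diff (-(k₂*ν)) (k₁*μ) ν μ
    · intro t
      have hd2 : deriv (deriv fun s : ℝ => k₁ * Real.sin (μ * s) + k₂ * Real.cos (ν * s)) t
          = -((k₁*μ)*μ) * Real.sin (μ*t) + (-(k₂*ν))*ν * Real.cos (ν*t) := by
        rw [hgs_trig_deriv k₁ k₂ μ ν]
        exact (hgs_trig_hasDerivAt (-(k₂*ν)) (k₁*μ) ν μ t).deriv
      rw [hd2, mul_neg, mul_neg, Real.sin_neg, Real.cos_neg]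
      have h1 : μ*μ = a - b := by nlinarith [hμ2]
      have h2 : ν*ν = a + b := by nlinarith [hν2]
      linear_combination (-(k₁ * Real.sin (μ*t))) * h1 + (-(k₂ * Real.cos (ν*t))) * h2
  · intro x hx1 hx2 heq
    obtain ⟨k₁, k₂, hx⟩ := part1 x hx1 hx2 heq
    constructor
    · refine ⟨|k₁| + |k₂|, fun t => ?_⟩
      rw [hx t]
      calc |k₁ * Real.sin (μ*t) + k₂ * Real.cos (ν*t)|
          ≤ |k₁ * Real.sin (μ*t)| + |k₂ * Real.cos (ν*t)| := abs_add_le _ _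
        _ = |k₁| * |Real.sin (μ*t)| + |k₂| * |Real.cos (ν*t)| := by rw [abs_mul, abs_mul]
        _ ≤ |k₁| * 1 + |k₂| * 1 := by
            gcongr
            · exact Real.abs_sin_le_one _
            · exact Real.abs_cos_le_one _
        _ = |k₁| + |k₂| := by ring
    · refine ⟨hx1.continuous, fun ε hε => ?_⟩
      have hπ := Real.pi_pos
      set δ₀ : ℝ := ε / (|k₂| + 1) with hδ₀
      have hδ₀pos : 0 < δ₀ := by positivity
      set δ' : ℝ := δ₀ / (2 * Real.pi) with hδ'
      have hδ'pos : 0 < δ' := by positivity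
      obtain ⟨Q, hQ, G, hG, hdense⟩ := hgs_key_dense (ν/μ) δ' hδ'pos
      set T : ℝ := (Q:ℝ) * (2*Real.pi/μ) with hT
      have hQR : (0:ℝ) < (Q:ℝ) := by exact_mod_cast hQ
      have hTpos : 0 < T := by positivity
      refine ⟨T * (G + 1), by positivity, fun xr => ?_⟩
      have hμne : μ ≠ 0 := ne_of_gt hμpos
      obtain ⟨j, m, hj1, hj2, hjm⟩ := hdense ⌈xr / T⌉
      refine ⟨(j:ℝ) * T, ?_, ?_⟩
      · -- membership in the set of ε-almost-periods
        intro t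
        rw [hx (t + (j:ℝ)*T), hx t]
        have hμτ : μ * (t + (j:ℝ)*T) = μ * t + ((j*Q : ℤ):ℝ) * (2*Real.pi) := by
          rw [hT]
          push_cast
          field_simp
        set r : ℝ := (j:ℝ) * ((Q:ℝ) * (ν/μ)) - (m:ℝ) with hr
        have hντ : ν * (t + (j:ℝ)*T) = (ν * t + 2*Real.pi*r) + (m:ℝ) * (2*Real.pi) := by
          rw [hr, hT]
          field_simp
          ring
        rw [hμτ, Real.sin_add_int_mul_two_pi, hντ, Real.cos_add_int_mul_two_pi]
        have hcos : |Real.cos (ν*t + 2*Real.pi*r) - Real.cos (ν*t)| ≤ 2*Real.pi*|r| := by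
          have := hgs_abs_cos_sub_cos_le (ν*t + 2*Real.pi*r) (ν*t)
          calc |Real.cos (ν*t + 2*Real.pi*r) - Real.cos (ν*t)|
              ≤ |ν*t + 2*Real.pi*r - ν*t| := this
            _ = |2*Real.pi*r| := by ring_nf
            _ = 2*Real.pi*|r| := by
                rw [abs_mul]
                rw [abs_of_pos (by positivity : (0:ℝ) < 2*Real.pi)]
        have hrδ : |r| < δ' := hjm
        have key : |k₂ * Real.cos (ν*t + 2*Real.pi*r) - k₂ * Real.cos (ν*t)| < ε := by
          rw [← mul_sub, abs_mul]
          have h1 : |k₂| * |Real.cos (ν*t + 2*Real.pi*r) - Real.cos (ν*t)| ≤ |k₂| * δ₀ := by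
            apply mul_le_mul_of_nonneg_left _ (abs_nonneg _)
            calc |Real.cos (ν*t + 2*Real.pi*r) - Real.cos (ν*t)| ≤ 2*Real.pi*|r| := hcos
              _ ≤ 2*Real.pi*δ' := by gcongr
              _ = δ₀ := by rw [hδ']; field_simp
          have h2 : |k₂| * δ₀ < ε := by
            rw [hδ₀]
            rw [div_eq_iff (by positivity : |k₂| + 1 ≠ 0)] at *
            calc |k₂| * (ε / (|k₂| + 1)) = ε * (|k₂| / (|k₂| + 1)) := by ring
              _ < ε * 1 := by
                  apply mul_lt_mul_of_pos_left _ hε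
                  rw [div_lt_one (by positivity)]
                  linarith
              _ = ε := mul_one ε
          linarith
        calc |k₁ * Real.sin (μ*t) + k₂ * Real.cos (ν*t + 2*Real.pi*r)
                - (k₁ * Real.sin (μ*t) + k₂ * Real.cos (ν*t))|
            = |k₂ * Real.cos (ν*t + 2*Real.pi*r) - k₂ * Real.cos (ν*t)| := by ring_nf
          _ < ε := key
      · -- interval membership
        constructor
        · have h1 : xr / T ≤ (⌈xr / T⌉ : ℝ) := Int.le_ceil _
          have h2 : xr / T ≤ (j:ℝ) := le_trans h1 hj1
          calc xr = (xr / T) * T := by field_simp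
            _ ≤ (j:ℝ) * T := by gcongr
        · have h1 : ((⌈xr / T⌉ : ℤ):ℝ) < xr / T + 1 := Int.ceil_lt_add_one _
          have h2 : (j:ℝ) ≤ xr / T + 1 + G := by linarith
          calc (j:ℝ) * T ≤ (xr / T + 1 + G) * T := by gcongr
            _ = xr + T * (G + 1) := by field_simp; ring
end

section
/- Let a, b ∈ ℝ with −a < b < a. For any x₀, x₀' ∈ ℝ, there is at most one twice differentiable solution x : ℝ → ℝ of the homogeneous equation x''(t) + a·x(t) + b·x(−t) = 0 with x(0) = x₀ and x'(0) = x₀'. -/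
theorem homogeneous_ivp_unique (a b : ℝ) (hba : -a < b) (hab : b < a)
    (x₀ x₀' : ℝ) (x₁ x₂ : ℝ → ℝ)
    (hx₁d : Differentiable ℝ x₁) (hx₁d2 : Differentiable ℝ (deriv x₁))
    (hx₂d : Differentiable ℝ x₂) (hx₂d2 : Differentiable ℝ (deriv x₂))
    (heq₁ : ∀ t : ℝ, deriv (deriv x₁) t + a * x₁ t + b * x₁ (-t) = 0)
    (heq₂ : ∀ t : ℝ, deriv (deriv x₂) t + a * x₂ t + b * x₂ (-t) = 0)
    (h₁0 : x₁ 0 = x₀) (h₁0' : deriv x₁ 0 = x₀')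
    (h₂0 : x₂ 0 = x₀) (h₂0' : deriv x₂ 0 = x₀') :
    x₁ = x₂ := by
  set y : ℝ → ℝ := fun t => x₁ t - x₂ t with hy
  have hyd : Differentiable ℝ y := hx₁d.sub hx₂d
  have hdy : deriv y = fun t => deriv x₁ t - deriv x₂ t := by
    funext t; exact deriv_sub (hx₁d t) (hx₂d t)
  have hy'd : Differentiable ℝ (deriv y) := by
    rw [hdy]; exact hx₁d2.sub hx₂d2
  have hode : ∀ t, deriv (deriv y) t = -(a * y t) - b * y (-t) := by
    intro t
    have : deriv (deriv y) t = deriv (deriv x₁) t - deriv (deriv x₂) t := by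
      rw [hdy]; exact deriv_sub (hx₁d2 t) (hx₂d2 t)
    have e1 := heq₁ t
    have e2 := heq₂ t
    simp only [hy]
    linarith [this]
  set E : ℝ → ℝ := fun t =>
    (deriv y t)^2 + (deriv y (-t))^2 + a * (y t)^2 + a * (y (-t))^2
      + 2 * b * (y t) * (y (-t)) with hE
  have hEd : ∀ t, HasDerivAt E 0 t := by
    intro t
    have hneg : HasDerivAt (fun s : ℝ => -s) (-1) t := (hasDerivAt_id t).neg
    have hyn : HasDerivAt (fun s => y (-s)) (deriv y (-t) * (-1)) t :=
      HasDerivAt.comp t (hyd (-t)).hasDerivAt hneg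
    have hy'n : HasDerivAt (fun s => deriv y (-s)) (deriv (deriv y) (-t) * (-1)) t :=
      HasDerivAt.comp t (hy'd (-t)).hasDerivAt hneg
    have h1 : HasDerivAt (fun s => (deriv y s)^2)
        (2 * (deriv y t)^1 * deriv (deriv y) t) t := (hy'd t).hasDerivAt.pow 2
    have h2 : HasDerivAt (fun s => (deriv y (-s))^2)
        (2 * (deriv y (-t))^1 * (deriv (deriv y) (-t) * (-1))) t := hy'n.pow 2
    have h3 : HasDerivAt (fun s => (y s)^2) (2 * (y t)^1 * deriv y t) t :=
      (hyd t).hasDerivAt.pow 2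
    have h4 : HasDerivAt (fun s => (y (-s))^2) (2 * (y (-t))^1 * (deriv y (-t) * (-1))) t :=
      hyn.pow 2
    have h5 : HasDerivAt (fun s => 2 * b * y s * y (-s))
        ((2 * b * deriv y t) * y (-t) + (2 * b * y t) * (deriv y (-t) * (-1))) t :=
      (((hyd t).hasDerivAt.const_mul (2*b)).mul hyn)
    have htot := ((((h1.add h2).add (h3.const_mul a)).add (h4.const_mul a)).add h5)
    have := hode t
    have hmt := hode (-t)
    rw [neg_neg] at hmt
    refine htot.congr_deriv ?_
    rw [this, hmt]
    ring
  have hEdiff : Differentiable ℝ E := fun t => (hEd t).differentiableAt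
  have hEderiv : ∀ t, deriv E t = 0 := fun t => (hEd t).deriv
  have hEconst : ∀ t, E t = E 0 := fun t =>
    is_const_of_deriv_eq_zero hEdiff hEderiv t 0
  have hy0 : y 0 = 0 := by simp [hy, h₁0, h₂0]
  have hy'0 : deriv y 0 = 0 := by rw [hdy]; simp [h₁0', h₂0']
  have hE0 : E 0 = 0 := by simp [hE, hy0, hy'0, neg_zero]
  have hzero : ∀ t, y t = 0 := by
    intro t
    have h := hEconst t
    rw [hE0] at h
    simp only [hE] at h
    have hs1 := sq_nonneg (deriv y t)
    have hs2 := sq_nonneg (deriv y (-t))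
    have hkey : (a+b) * (y t + y (-t))^2 + (a-b) * (y t - y (-t))^2 ≤ 0 := by nlinarith
    have hp1 : (0:ℝ) ≤ (a+b) * (y t + y (-t))^2 :=
      mul_nonneg (by linarith) (sq_nonneg _)
    have hp2 : (0:ℝ) ≤ (a-b) * (y t - y (-t))^2 :=
      mul_nonneg (by linarith) (sq_nonneg _)
    have he1 : (a+b) * (y t + y (-t))^2 = 0 := by linarith
    have he2 : (a-b) * (y t - y (-t))^2 = 0 := by linarith
    have hq1 : (y t + y (-t))^2 = 0 := by
      rcases mul_eq_zero.mp he1 with h' | h'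
      · linarith
      · exact h'
    have hq2 : (y t - y (-t))^2 = 0 := by
      rcases mul_eq_zero.mp he2 with h' | h'
      · linarith
      · exact h'
    have := pow_eq_zero_iff (n := 2) (by norm_num) |>.mp hq1
    have := pow_eq_zero_iff (n := 2) (by norm_num) |>.mp hq2
    linarith
  funext t
  have := hzero t
  simp only [hy] at this
  linarith
end
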